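/- Let c = (A_1|⋯|A_r, B_1|⋯|B_r) be a bipartition on (a, b) with r > 1. For 1 ≤ k ≤ r let (a_{k,1},…,a_{k,p_k}) := EP_{A_1 ∪ ⋯ ∪ A_k}(A_k) and (b_{k,1},…,b_{k,q_k}) := EP_{B_k ∪ ⋯ ∪ B_r}(B_k), and let C_k be the q_k × p_k elementary matrix with (i,j) entry b_{k,i}/a_{k,j}. Then c = C_1 C_2 ⋯ C_r is a factorization of c (each consecutive pair is a Block Transverse Pair and the iterated product equals c), and it is the unique factorization of c into elementary bipartition matrices. -/

import Mathlib

namespace BipM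

/-- A bipartition `β/α` of length `r` is encoded as a list of `r` biblocks
`(Aₜ, Bₜ)` (denominator block, numerator block). -/
abbrev Bip : Type := List (Finset ℕ × Finset ℕ)

/-- The union of the blocks of a list of finite sets. -/
def listUnion (L : List (Finset ℕ)) : Finset ℕ := L.foldr (· ∪ ·) ∅

/-- `L` is an augmented partition of `s`. -/
def IsAugPart (s : Finset ℕ) (L : List (Finset ℕ)) : Prop :=
  L.Pairwise Disjoint ∧ listUnion L = s

/-- `c` is a bipartition on `(a, b)` (of length `c.length ≥ 1`). -/
def IsBipartition (a b : Finset ℕ) (c : Bip) : Prop :=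
  c ≠ [] ∧ IsAugPart a (c.map Prod.fst) ∧ IsAugPart b (c.map Prod.snd)

/-- The input set of a bipartition (union of its denominator blocks). -/
def bipIS (c : Bip) : Finset ℕ := listUnion (c.map Prod.fst)

/-- The output set of a bipartition (union of its numerator blocks). -/
def bipOS (c : Bip) : Finset ℕ := listUnion (c.map Prod.snd)

/-- The `(i,j)` entry of a matrix of bipartitions (list of rows, 0-indexed). -/
def entry (M : List (List Bip)) (i j : ℕ) : Bip := (M.getD i []).getD j []

/-- The number of columns of a matrix given as a list of rows. -/
def wid (M : List (List Bip)) : ℕ := (M.headD []).length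

/-- `M` is a (`M.length × wid M`) bipartition matrix over `(a₁,…,a_p ; b₁,…,b_q)`,
where `a_j = bipIS (entry M 0 j)` and `b_i = bipOS (entry M i 0)`:  it is a nonempty
rectangular matrix of bipartitions, the numerators of the `(i,j)` entry form an
augmented partition of `b_i`, the denominators form an augmented partition of `a_j`,
and the `a_j` (resp. `b_i`) are pairwise disjoint (being the blocks of augmented
partitions of the ambient input/output sets). -/
structure IsBipMat (M : List (List Bip)) : Prop where
  nrows : M ≠ []
  ncols : M.headD [] ≠ []
  rect : ∀ row ∈ M, row.length = wid M
  entries_ne : ∀ row ∈ M, ∀ e ∈ row, e ≠ []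
  rows : ∀ i j, i < M.length → j < wid M →
    IsAugPart (bipOS (entry M i 0)) ((entry M i j).map Prod.snd)
  cols : ∀ i j, i < M.length → j < wid M →
    IsAugPart (bipIS (entry M 0 j)) ((entry M i j).map Prod.fst)
  in_disj : ∀ j j', j < wid M → j' < wid M → j ≠ j' →
    Disjoint (bipIS (entry M 0 j)) (bipIS (entry M 0 j'))
  out_disj : ∀ i i', i < M.length → i' < M.length → i ≠ i' →
    Disjoint (bipOS (entry M i 0)) (bipOS (entry M i' 0))

/-- The input set `is(M)` of a bipartition matrix. -/
def matIS (M : List (List Bip)) : Finset ℕ := listUnion ((M.headD []).map bipIS)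

/-- The output set `os(M)` of a bipartition matrix. -/
def matOS (M : List (List Bip)) : Finset ℕ := listUnion (M.map (fun row => bipOS (row.headD [])))

/-- The `λ`-projection `μ_λ`: for `λ = {λ¹ < ⋯ < λ^k} ⊆ {1,…,r−1}` and `L` of length
`r`, merge the blocks of `L` at the cut positions of `λ`, producing `k + 1` blocks
`Ā_i = A_{λ^{i−1}+1} ∪ ⋯ ∪ A_{λ^i}` (with `λ⁰ = 0`, `λ^{k+1} = r`). -/
def muProj (lam : Finset ℕ) (L : List (Finset ℕ)) : List (Finset ℕ) :=
  (List.range (lam.card + 1)).map fun i =>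
    (Finset.Ico (((0 :: lam.sort (· ≤ ·)) ++ [L.length]).getD i 0)
        (((0 :: lam.sort (· ≤ ·)) ++ [L.length]).getD (i + 1) 0)).biUnion
      fun j => L.getD j ∅

/-- The `(i,j)` entry of a matrix of finite sets. -/
def lamEntry (lam : List (List (Finset ℕ))) (i j : ℕ) : Finset ℕ := (lam.getD i []).getD j ∅

/-- Shape condition for (row/column) equalizers: `lam` has the same matrix dimensions
as `M` and `lam_{ij} ⊆ {1,…,r_{ij}−1}` where `r_{ij}` is the length of the `(i,j)`
entry of `M`. -/
def EqShape (M : List (List Bip)) (lam : List (List (Finset ℕ))) : Prop :=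
  lam.length = M.length ∧ (∀ row ∈ lam, row.length = wid M) ∧
  ∀ i j, i < M.length → j < wid M →
    ∀ x ∈ lamEntry lam i j, 1 ≤ x ∧ x + 1 ≤ (entry M i j).length

/-- Row condition: in each row, the `λ`-projections of the numerators agree. -/
def RowCond (M : List (List Bip)) (lam : List (List (Finset ℕ))) : Prop :=
  ∀ i j j', i < M.length → j < wid M → j' < wid M →
    muProj (lamEntry lam i j) ((entry M i j).map Prod.snd)
      = muProj (lamEntry lam i j') ((entry M i j').map Prod.snd)

/-- Column condition: in each column, the `λ`-projections of the denominators agree. -/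
def ColCond (M : List (List Bip)) (lam : List (List (Finset ℕ))) : Prop :=
  ∀ i i' j, i < M.length → i' < M.length → j < wid M →
    muProj (lamEntry lam i j) ((entry M i j).map Prod.fst)
      = muProj (lamEntry lam i' j) ((entry M i' j).map Prod.fst)

/-- A row equalizer of `M`: cardinalities `s_i` constant along each row. -/
def IsRowEqualizer (M : List (List Bip)) (lam : List (List (Finset ℕ))) : Prop :=
  EqShape M lam ∧
  (∀ i j j', i < M.length → j < wid M → j' < wid M →
      (lamEntry lam i j).card = (lamEntry lam i j').card) ∧
  RowCond M lam

/-- A column equalizer of `M`: cardinalities `t_j` constant along each column. -/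
def IsColEqualizer (M : List (List Bip)) (lam : List (List (Finset ℕ))) : Prop :=
  EqShape M lam ∧
  (∀ i i' j, i < M.length → i' < M.length → j < wid M →
      (lamEntry lam i j).card = (lamEntry lam i' j).card) ∧
  ColCond M lam

/-- An equalizer of `M` with constant cardinality `r`. -/
def IsEqualizer (M : List (List Bip)) (lam : List (List (Finset ℕ))) (r : ℕ) : Prop :=
  EqShape M lam ∧
  (∀ i j, i < M.length → j < wid M → (lamEntry lam i j).card = r) ∧
  RowCond M lam ∧ ColCond M lam

/-- A maximal row equalizer: each `s_i` is maximal among row equalizers. -/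
def IsMaxRowEqualizer (M : List (List Bip)) (lam : List (List (Finset ℕ))) : Prop :=
  IsRowEqualizer M lam ∧
  ∀ mu, IsRowEqualizer M mu → ∀ i, i < M.length →
    (lamEntry mu i 0).card ≤ (lamEntry lam i 0).card

/-- A maximal column equalizer: each `t_j` is maximal among column equalizers. -/
def IsMaxColEqualizer (M : List (List Bip)) (lam : List (List (Finset ℕ))) : Prop :=
  IsColEqualizer M lam ∧
  ∀ mu, IsColEqualizer M mu → ∀ j, j < wid M →
    (lamEntry mu 0 j).card ≤ (lamEntry lam 0 j).card

/-- A maximal equalizer: `r` is maximal among equalizers. -/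
def IsMaxEqualizer (M : List (List Bip)) (lam : List (List (Finset ℕ))) (r : ℕ) : Prop :=
  IsEqualizer M lam r ∧ ∀ mu r', IsEqualizer M mu r' → r' ≤ r

/-- Lexicographic comparison of finite sets of naturals, viewed as increasing lists. -/
def finsetLex (S T : Finset ℕ) : Prop :=
  List.Lex (· < ·) (S.sort (· ≤ ·)) (T.sort (· ≤ ·))

/-- Lexicographic comparison of matrices of finite sets, entries listed in row order. -/
def matLexLt (lam mu : List (List (Finset ℕ))) : Prop :=
  List.Lex finsetLex lam.flatten mu.flatten

/-- The canonical maximal equalizer `Λ(M)`: the lexicographically least maximal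
equalizer. -/
def IsCanonMaxEqualizer (M : List (List Bip)) (lam : List (List (Finset ℕ))) (r : ℕ) : Prop :=
  IsMaxEqualizer M lam r ∧
  ∀ mu r', IsMaxEqualizer M mu r' → mu = lam ∨ matLexLt lam mu

/-- The canonical maximal row equalizer `Λ^{row}(M)`. -/
def IsCanonMaxRowEqualizer (M : List (List Bip)) (lam : List (List (Finset ℕ))) : Prop :=
  IsMaxRowEqualizer M lam ∧
  ∀ mu, IsMaxRowEqualizer M mu → mu = lam ∨ matLexLt lam mu

/-- The canonical maximal column equalizer `Λ^{col}(M)`. -/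
def IsCanonMaxColEqualizer (M : List (List Bip)) (lam : List (List (Finset ℕ))) : Prop :=
  IsMaxColEqualizer M lam ∧
  ∀ mu, IsMaxColEqualizer M mu → mu = lam ∨ matLexLt lam mu

/-- `kth S u` is the `u`-th smallest element of `S` (0-indexed), i.e. `S^{u+1}`. -/
def kth (S : Finset ℕ) (u : ℕ) : ℕ := (S.sort (· ≤ ·)).getD u 0

/-- Split `a` along an increasing list of cut points. -/
def epBlocks (a : Finset ℕ) : List ℕ → List (Finset ℕ)
  | [] => [a]
  | d :: ds => (a.filter (fun x => x < d)) :: epBlocks (a.filter (fun x => d < x)) ds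

/-- The embedding partition `EP_b(a)` of `a ⊆ b`. -/
def EP (b a : Finset ℕ) : List (Finset ℕ) :=
  epBlocks a ((b \ a).sort (· ≤ ·))

/-- The `q×1` factor of the transverse decomposition of the bipartition `c` on
`(a,b)` at `1 ≤ lam < c.length`, recorded as its list of `q` entries: with
`(b₁,…,b_q) = EP_b(B₁ ∪ ⋯ ∪ B_lam)`, the `i`-th entry is
`(A₁|⋯|A_lam , B₁∩b_i|⋯|B_lam∩b_i)`. -/
def transColumn (b : Finset ℕ) (c : Bip) (lam : ℕ) : List Bip :=
  (EP b (listUnion ((c.take lam).map Prod.snd))).map fun bi =>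
    (c.take lam).map fun x => (x.1, x.2 ∩ bi)

/-- The `1×p` factor of the transverse decomposition of `c` at `lam`: with
`(a₁,…,a_p) = EP_a(A_{lam+1} ∪ ⋯ ∪ A_r)`, the `j`-th entry is
`(A_{lam+1}∩a_j|⋯|A_r∩a_j , B_{lam+1}|⋯|B_r)`. -/
def transRow (a : Finset ℕ) (c : Bip) (lam : ℕ) : List Bip :=
  (EP a (listUnion ((c.drop lam).map Prod.fst))).map fun aj =>
    (c.drop lam).map fun x => (x.1 ∩ aj, x.2)

/-- `(Acol, Brow)` is a Transverse Pair: it is the transverse decomposition of some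
bipartition at some `lam`.  (`Acol` is the entry list of a `q×1` matrix, `Brow` the
entry list of a `1×p` matrix.) -/
def IsTP (Acol Brow : List Bip) : Prop :=
  ∃ (a b : Finset ℕ) (c : Bip) (lam : ℕ),
    IsBipartition a b c ∧ 1 ≤ lam ∧ lam < c.length ∧
    Acol = transColumn b c lam ∧ Brow = transRow a c lam

/-- The value `AB` of the formal product of a transverse pair: the bipartition
recovered by merging numerators down the column factor and denominators along the
row factor. -/
def tpProd (Acol Brow : List Bip) : Bip :=
  ((List.range (Acol.headD []).length).map fun t =>
    (((Acol.headD []).getD t (∅, ∅)).1, listUnion (Acol.map fun e => (e.getD t (∅, ∅)).2)))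
  ++ ((List.range (Brow.headD []).length).map fun t =>
    (listUnion (Brow.map fun e => (e.getD t (∅, ∅)).1), ((Brow.headD []).getD t (∅, ∅)).2))

/-- The `q_{i}×1` block of `A` in rows `[off, off+h)` and column `j`, as its entry
list. -/
def colBlock (A : List (List Bip)) (off h j : ℕ) : List Bip :=
  ((A.drop off).take h).map fun row => row.getD j []

/-- The `1×p_j` block of row `i` of `B` in columns `[off, off+w)`, as its entry
list. -/
def rowBlock (B : List (List Bip)) (i off w : ℕ) : List Bip :=
  ((B.getD i []).drop off).take w

/-- `C` is the value of the product of the Block Transverse Pair `(A, B)`: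
there are block decompositions of `A` into `t×s` column blocks `A_{ij}` (row-group
sizes `qs`) and of `B` into `t×s` row blocks `B_{ij}` (column-group sizes `ps`)
such that each `(A_{ij}, B_{ij})` is a TP and `C = (A_{ij}B_{ij})`. -/
def IsBTPProd (A B C : List (List Bip)) : Prop :=
  ∃ qs ps : List ℕ,
    qs.length = B.length ∧ ps.length = wid A ∧
    qs.sum = A.length ∧ ps.sum = wid B ∧
    (∀ x ∈ qs, 1 ≤ x) ∧ (∀ x ∈ ps, 1 ≤ x) ∧
    C.length = B.length ∧ (∀ row ∈ C, row.length = wid A) ∧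
    ∀ i j, i < B.length → j < wid A →
      IsTP (colBlock A ((qs.take i).sum) (qs.getD i 0) j)
           (rowBlock B i ((ps.take j).sum) (ps.getD j 0)) ∧
      entry C i j = tpProd (colBlock A ((qs.take i).sum) (qs.getD i 0) j)
                           (rowBlock B i ((ps.take j).sum) (ps.getD j 0))

/-- `(A, B)` is a Block Transverse Pair. -/
def IsBTP (A B : List (List Bip)) : Prop := ∃ C, IsBTPProd A B C

/-- `Cs = [C₁,…,C_r]` (`r ≥ 2`) is a factorization of the bipartition matrix `M`:
each `C_k` is a bipartition matrix, each consecutive pair is a BTP, and the iterated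
product `(⋯(C₁C₂)⋯)C_r` (witnessed by the chain `D` of partial products) equals `M`. -/
def IsMatFactorization (Cs : List (List (List Bip))) (M : List (List Bip)) : Prop :=
  2 ≤ Cs.length ∧
  (∀ F ∈ Cs, IsBipMat F) ∧
  (∀ k, k + 1 < Cs.length → IsBTP (Cs.getD k []) (Cs.getD (k + 1) [])) ∧
  ∃ D : List (List (List Bip)),
    D.length = Cs.length ∧
    D.getD 0 [] = Cs.getD 0 [] ∧
    (∀ k, k + 1 < Cs.length → IsBTPProd (D.getD k []) (Cs.getD (k + 1) []) (D.getD (k + 1) [])) ∧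
    D.getD (Cs.length - 1) [] = M

/-- A bipartition matrix is indecomposable if its only equalizer is null. -/
def Indecomposable (M : List (List Bip)) : Prop :=
  ∀ lam r, IsEqualizer M lam r → r = 0

end BipM

namespace BipM

/-- The `k`-th (0-indexed) elementary factor of the bipartition
`c = (A₁|⋯|A_r , B₁|⋯|B_r)`:  with `(a_{k,1},…,a_{k,p_k}) = EP_{A₁∪⋯∪A_{k+1}}(A_{k+1})`
and `(b_{k,1},…,b_{k,q_k}) = EP_{B_{k+1}∪⋯∪B_r}(B_{k+1})` (1-indexed in the paper),
the `q_k × p_k` elementary matrix with `(i,j)` entry the length-one bipartition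
`b_{k,i} / a_{k,j}`. -/
def elemFactor (c : Bip) (k : ℕ) : List (List Bip) :=
  (EP (listUnion ((c.drop k).map Prod.snd)) ((c.getD k (∅, ∅)).2)).map fun bi =>
    (EP (listUnion ((c.take (k + 1)).map Prod.fst)) ((c.getD k (∅, ∅)).1)).map fun aj =>
      [(aj, bi)]

/-- `M` is an elementary bipartition matrix: its `(i,j)` entry is the elementary
(length-one) bipartition `b_i/a_j`. -/
def IsElemMat (M : List (List Bip)) : Prop :=
  ∃ as bs : List (Finset ℕ), M = bs.map fun bo => as.map fun ao => [(ao, bo)]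

section Part1
open List

variable {α β : Type*}

/-! ### generic list lemmas -/

lemma getD_map' (l : List α) (f : α → β) (d : β) (d' : α) {n : ℕ} (h : n < l.length) :
    (l.map f).getD n d = f (l.getD n d') := by
  rw [List.getD_eq_getElem _ _ (by simpa using h), List.getD_eq_getElem _ _ h]
  simp

lemma getD_mem' (l : List α) (d : α) {n : ℕ} (h : n < l.length) : l.getD n d ∈ l := by
  rw [List.getD_eq_getElem _ _ h]; exact List.getElem_mem _

lemma headD_mem' (l : List α) (d : α) (h : l ≠ []) : l.headD d ∈ l := by
  cases l with
  | nil => exact absurd rfl h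
  | cons x xs => simp

lemma take_eq_range_map_getD (l : List α) (d : α) {n : ℕ} (h : n ≤ l.length) :
    (List.range n).map (fun t => l.getD t d) = l.take n := by
  apply List.ext_getElem
  · simp [Nat.min_eq_left h]
  · intro i h1 h2
    simp only [List.getElem_map, List.getElem_range, List.getElem_take]
    rw [List.getD_eq_getElem]

lemma singleton_of_length_one {l : List α} (d : α) (h : l.length = 1) : l = [l.getD 0 d] := by
  cases l with
  | nil => simp at h
  | cons x xs => cases xs with
    | nil => rfl
    | cons y ys => simp at h

/-- block-decomposition extensionality -/
lemma eq_of_blocks (qs : List ℕ) : ∀ (L M : List α), L.length = qs.sum → M.length = qs.sum →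
    (∀ i, i < qs.length →
      (L.drop ((qs.take i).sum)).take (qs.getD i 0) = (M.drop ((qs.take i).sum)).take (qs.getD i 0)) →
    L = M := by
  induction qs with
  | nil => intro L M hL hM _; rw [List.eq_nil_of_length_eq_zero hL, List.eq_nil_of_length_eq_zero hM]
  | cons q qs ih =>
    intro L M hL hM h
    have h0 := h 0 (by simp)
    simp only [List.take_zero, List.sum_nil, List.drop_zero, List.getD_cons_zero] at h0
    have htail : L.drop q = M.drop q := by
      apply ih
      · simp [hL, List.sum_cons]
      · simp [hM, List.sum_cons]
      · intro i hi
        have := h (i + 1) (by simpa using hi)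
        simpa [List.take_succ_cons, List.sum_cons, List.drop_drop, Nat.add_comm] using this
    calc L = L.take q ++ L.drop q := (List.take_append_drop _ _).symm
    _ = M.take q ++ M.drop q := by rw [h0, htail]
    _ = M := List.take_append_drop _ _

lemma flatten_drop_take (cs : List (List α)) : ∀ i, i < cs.length →
    (cs.flatten.drop (((cs.map List.length).take i).sum)).take ((cs.map List.length).getD i 0)
      = cs.getD i [] := by
  induction cs with
  | nil => intro i hi; simp at hi
  | cons c cs ih =>
    intro i hi
    cases i with
    | zero => simpa using List.take_left c cs.flatten
    | succ i =>
      have := ih i (by simpa using hi)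
      simpa [List.flatten_cons, List.sum_cons, Nat.add_comm, List.drop_length_add_append] using this

lemma sum_take_le (qs : List ℕ) (n : ℕ) : (qs.take n).sum ≤ qs.sum := by
  conv_rhs => rw [← List.take_append_drop n qs]
  rw [List.sum_append]
  exact Nat.le_add_right _ _

end Part1
section Part2

/-! ### listUnion lemmas -/

@[simp] lemma listUnion_nil : listUnion [] = ∅ := rfl

@[simp] lemma listUnion_cons (s : Finset ℕ) (L : List (Finset ℕ)) :
    listUnion (s :: L) = s ∪ listUnion L := rfl

lemma listUnion_append (L M : List (Finset ℕ)) :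
    listUnion (L ++ M) = listUnion L ∪ listUnion M := by
  induction L with
  | nil => simp
  | cons s L ih => simp [ih, Finset.union_assoc]

lemma subset_listUnion {L : List (Finset ℕ)} {s : Finset ℕ} (h : s ∈ L) : s ⊆ listUnion L := by
  induction L with
  | nil => simp at h
  | cons t L ih =>
    rcases List.mem_cons.1 h with rfl | h
    · exact Finset.subset_union_left
    · exact (ih h).trans Finset.subset_union_right

lemma listUnion_inter (L : List (Finset ℕ)) (s : Finset ℕ) :
    listUnion (L.map (· ∩ s)) = listUnion L ∩ s := by
  induction L with
  | nil => simp
  | cons t L ih => simp [ih, Finset.union_inter_distrib_right]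

lemma listUnion_inter' (L : List (Finset ℕ)) (s : Finset ℕ) :
    listUnion (L.map (s ∩ ·)) = s ∩ listUnion L := by
  rw [Finset.inter_comm, ← listUnion_inter]
  congr 1
  exact List.map_congr_left (fun x _ => Finset.inter_comm s x)

lemma listUnion_take_subset (L : List (Finset ℕ)) (n : ℕ) :
    listUnion (L.take n) ⊆ listUnion L := by
  conv_rhs => rw [← List.take_append_drop n L]
  rw [listUnion_append]; exact Finset.subset_union_left

lemma disjoint_listUnion_right {s : Finset ℕ} {L : List (Finset ℕ)}
    (h : ∀ t ∈ L, Disjoint s t) : Disjoint s (listUnion L) := by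
  induction L with
  | nil => simp
  | cons t L ih =>
    simp only [listUnion_cons, Finset.disjoint_union_right]
    exact ⟨h t (by simp), ih (fun u hu => h u (by simp [hu]))⟩

lemma disjoint_listUnion_left {s : Finset ℕ} {L : List (Finset ℕ)}
    (h : ∀ t ∈ L, Disjoint t s) : Disjoint (listUnion L) s :=
  (disjoint_listUnion_right (fun t ht => (h t ht).symm)).symm

/-- for a pairwise disjoint list of sets, the union minus a prefix union is the suffix union -/
lemma listUnion_sdiff_take (L : List (Finset ℕ)) (h : L.Pairwise Disjoint) (n : ℕ) :
    listUnion L \ listUnion (L.take n) = listUnion (L.drop n) := by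
  have hd : Disjoint (listUnion (L.take n)) (listUnion (L.drop n)) := by
    apply disjoint_listUnion_left
    intro t ht
    apply disjoint_listUnion_right
    intro u hu
    have hp : (L.take n ++ L.drop n).Pairwise Disjoint := by rw [List.take_append_drop]; exact h
    exact (List.pairwise_append.1 hp).2.2 t ht u hu
  have hU : listUnion L = listUnion (L.take n) ∪ listUnion (L.drop n) := by
    rw [← listUnion_append, List.take_append_drop]
  rw [hU]
  exact Finset.union_sdiff_cancel_left hd

/-! ### epBlocks lemmas -/

@[simp] lemma epBlocks_nil (a : Finset ℕ) : epBlocks a [] = [a] := rfl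

lemma epBlocks_cons (a : Finset ℕ) (d : ℕ) (ds : List ℕ) :
    epBlocks a (d :: ds) = (a.filter (fun x => x < d)) :: epBlocks (a.filter (fun x => d < x)) ds := rfl

lemma epBlocks_length (ds : List ℕ) : ∀ a, (epBlocks a ds).length = ds.length + 1 := by
  induction ds with
  | nil => intro a; rfl
  | cons d ds ih => intro a; simp [epBlocks_cons, ih]

lemma epBlocks_ne (a : Finset ℕ) (ds : List ℕ) : epBlocks a ds ≠ [] := by
  have := epBlocks_length ds a
  intro h; rw [h] at this; simp at this

lemma epBlocks_subset (ds : List ℕ) : ∀ a, ∀ blk ∈ epBlocks a ds, blk ⊆ a := by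
  induction ds with
  | nil => intro a blk hblk; simp at hblk; simp [hblk]
  | cons d ds ih =>
    intro a blk hblk
    rw [epBlocks_cons] at hblk
    rcases List.mem_cons.1 hblk with rfl | hblk
    · exact Finset.filter_subset _ _
    · exact (ih _ blk hblk).trans (Finset.filter_subset _ _)

lemma epBlocks_union (ds : List ℕ) : ∀ a : Finset ℕ, (∀ x ∈ a, x ∉ ds) →
    listUnion (epBlocks a ds) = a := by
  induction ds with
  | nil => intro a _; simp
  | cons d ds ih =>
    intro a ha
    rw [epBlocks_cons, listUnion_cons, ih _ (fun x hx => by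
      have := ha x (Finset.mem_of_mem_filter x hx)
      intro hc; exact this (by simp [hc]))]
    ext x
    simp only [Finset.mem_union, Finset.mem_filter]
    constructor
    · rintro (⟨h1, _⟩ | ⟨h1, _⟩) <;> exact h1
    · intro hx
      have hne : x ≠ d := fun hc => ha x hx (by simp [hc])
      rcases Nat.lt_or_ge x d with h | h
      · exact Or.inl ⟨hx, h⟩
      · exact Or.inr ⟨hx, lt_of_le_of_ne h (Ne.symm hne)⟩

lemma epBlocks_pairwise (ds : List ℕ) : ∀ a, (epBlocks a ds).Pairwise Disjoint := by
  induction ds with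
  | nil => intro a; simp
  | cons d ds ih =>
    intro a
    rw [epBlocks_cons]
    refine List.Pairwise.cons ?_ (ih _)
    intro blk hblk
    have h1 : blk ⊆ a.filter (fun x => d < x) := epBlocks_subset ds _ blk hblk
    apply Finset.disjoint_left.2
    intro x hx hx'
    have := (Finset.mem_filter.1 hx).2
    have := (Finset.mem_filter.1 (h1 hx')).2
    omega

lemma epBlocks_inter (ds : List ℕ) : ∀ (a s : Finset ℕ),
    (epBlocks a ds).map (· ∩ s) = epBlocks (a ∩ s) ds := by
  induction ds with
  | nil => intro a s; simp
  | cons d ds ih =>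
    intro a s
    rw [epBlocks_cons, epBlocks_cons, List.map_cons, ih]
    congr 1
    · ext x; simp only [Finset.mem_inter, Finset.mem_filter]; tauto
    · congr 1; ext x; simp only [Finset.mem_inter, Finset.mem_filter]; tauto

lemma epBlocks_split (y : ℕ) (ys : List ℕ) : ∀ (xs : List ℕ) (a : Finset ℕ), (∀ x ∈ xs, x < y) →
    epBlocks a (xs ++ y :: ys) =
      epBlocks (a.filter (· < y)) xs ++ epBlocks (a.filter (y < ·)) ys := by
  intro xs
  induction xs with
  | nil => intro a _; simp [epBlocks_cons]
  | cons x xs ih =>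
    intro a hxy
    have hxlt : x < y := hxy x (by simp)
    rw [List.cons_append, epBlocks_cons, epBlocks_cons,
      ih _ (fun z hz => hxy z (by simp [hz])), List.cons_append]
    have key : ∀ z : ℕ, (z < x → z < y) ∧ (y < z → x < z) :=
      fun z => ⟨fun h => h.trans hxlt, fun h => hxlt.trans h⟩
    have h1 : (a.filter (fun z => z < y)).filter (fun z => z < x)
        = a.filter (fun z => z < x) := by
      ext z; simp only [Finset.mem_filter]; have := key z; tauto
    have h2 : ((a.filter (fun z => x < z)).filter (fun z => z < y))
        = (a.filter (fun z => z < y)).filter (fun z => x < z) := by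
      ext z; simp only [Finset.mem_filter]; tauto
    have h3 : ((a.filter (fun z => x < z)).filter (fun z => y < z))
        = a.filter (fun z => y < z) := by
      ext z; simp only [Finset.mem_filter]; have := key z; tauto
    rw [h1, h2, h3]

end Part2
section Part3

/-! ### sort lemmas -/

lemma sort_split {X : Finset ℕ} {e : ℕ} (he : e ∈ X) :
    X.sort (· ≤ ·) = (X.filter (fun z => z < e)).sort (· ≤ ·)
      ++ e :: (X.filter (fun z => e < z)).sort (· ≤ ·) := by
  apply (fun hp h1 h2 => List.Perm.eq_of_pairwise' (r := fun x y : ℕ => x ≤ y) h1 h2 hp)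
  · rw [List.perm_ext_iff_of_nodup (Finset.sort_nodup _ _)]
    · intro z
      simp only [Finset.mem_sort, List.mem_append, List.mem_cons, Finset.mem_filter]
      constructor
      · intro hz
        rcases Nat.lt_trichotomy z e with h | h | h
        · exact Or.inl ⟨hz, h⟩
        · exact Or.inr (Or.inl h)
        · exact Or.inr (Or.inr ⟨hz, h⟩)
      · rintro (⟨h, _⟩ | rfl | ⟨h, _⟩) <;> first | exact h | exact he
    · rw [List.nodup_append]
      refine ⟨Finset.sort_nodup _ _, ?_, ?_⟩
      · rw [List.nodup_cons]
        refine ⟨?_, Finset.sort_nodup _ _⟩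
        simp only [Finset.mem_sort, Finset.mem_filter]
        omega
      · intro z hz w hz'
        simp only [Finset.mem_sort, Finset.mem_filter] at hz
        simp only [List.mem_cons, Finset.mem_sort, Finset.mem_filter] at hz'
        rcases hz' with rfl | ⟨_, h⟩ <;> omega
  · exact Finset.pairwise_sort _ _
  · rw [List.pairwise_append]
    refine ⟨Finset.pairwise_sort _ _, ?_, ?_⟩
    · rw [List.pairwise_cons]
      refine ⟨?_, Finset.pairwise_sort _ _⟩
      intro z hz
      simp only [Finset.mem_sort, Finset.mem_filter] at hz
      omega
    · intro x hx z hz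
      simp only [Finset.mem_sort, Finset.mem_filter] at hx
      simp only [List.mem_cons, Finset.mem_sort, Finset.mem_filter] at hz
      rcases hz with rfl | ⟨_, h⟩ <;> omega

lemma sort_min'_cons {X : Finset ℕ} (hne : X.Nonempty) :
    X.sort (· ≤ ·) = X.min' hne :: (X.erase (X.min' hne)).sort (· ≤ ·) := by
  set e := X.min' hne with hedef
  have he : e ∈ X := X.min'_mem hne
  have h1 : X.filter (fun z => z < e) = ∅ := by
    apply Finset.filter_eq_empty_iff.2
    intro z hz
    have := X.min'_le z hz
    omega
  have h2 : X.filter (fun z => e < z) = X.erase e := by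
    ext z
    simp only [Finset.mem_filter, Finset.mem_erase]
    constructor
    · rintro ⟨hz, h⟩; exact ⟨by omega, hz⟩
    · rintro ⟨hz, h⟩
      have := X.min'_le z h
      refine ⟨h, by omega⟩
  rw [sort_split he, h1, h2]
  simp

/-! ### EP lemmas -/

lemma EP_length (b a : Finset ℕ) : (EP b a).length = (b \ a).card + 1 := by
  rw [EP, epBlocks_length, Finset.length_sort]

lemma EP_ne (b a : Finset ℕ) : EP b a ≠ [] := epBlocks_ne _ _

lemma EP_subset {b a : Finset ℕ} : ∀ blk ∈ EP b a, blk ⊆ a := epBlocks_subset _ _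

lemma EP_union (b a : Finset ℕ) : listUnion (EP b a) = a := by
  apply epBlocks_union
  intro x hx hc
  rw [Finset.mem_sort] at hc
  exact (Finset.mem_sdiff.1 hc).2 hx

lemma EP_pairwise (b a : Finset ℕ) : (EP b a).Pairwise Disjoint := epBlocks_pairwise _ _

lemma EP_self (a : Finset ℕ) : EP a a = [a] := by
  rw [EP, Finset.sdiff_self]
  simp [epBlocks_nil]

/-- **Grouping lemma**: refining an embedding partition. -/
lemma EP_group : ∀ n (b t s : Finset ℕ), (b \ t).card = n → s ⊆ t → t ⊆ b →
    EP b s = (EP b t).flatMap (fun blk => EP blk (s ∩ blk)) := by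
  intro n
  induction n using Nat.strong_induction_on with
  | _ n ih =>
    intro b t s hcard hst htb
    rcases Nat.eq_zero_or_pos n with rfl | hpos
    · -- b = t
      have hbt : b = t := by
        apply Finset.Subset.antisymm _ htb
        intro z hz
        by_contra hzt
        have : z ∈ b \ t := Finset.mem_sdiff.2 ⟨hz, hzt⟩
        rw [Finset.card_eq_zero.1 hcard] at this
        simp at this
      subst hbt
      rw [EP_self, List.flatMap_cons, List.flatMap_nil, List.append_nil,
        Finset.inter_eq_left.2 hst]
    · have hne : (b \ t).Nonempty := by
        rw [← Finset.card_pos, hcard]; exact hpos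
      set e := (b \ t).min' hne with hedef
      have heMem : e ∈ b \ t := (b \ t).min'_mem hne
      have heb : e ∈ b := (Finset.mem_sdiff.1 heMem).1
      have het : e ∉ t := (Finset.mem_sdiff.1 heMem).2
      have hes : e ∉ s := fun h => het (hst h)
      have hemin : ∀ z ∈ b \ t, e ≤ z := fun z hz => (b \ t).min'_le z hz
      -- expand EP b t
      have hEPbt : EP b t = t.filter (fun z => z < e)
          :: epBlocks (t.filter (fun z => e < z)) (((b \ t).erase e).sort (· ≤ ·)) := by
        rw [EP, sort_min'_cons hne, epBlocks_cons]
      -- expand EP b s via split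
      have hesb : e ∈ b \ s := Finset.mem_sdiff.2 ⟨heb, hes⟩
      have hsplit : EP b s =
          epBlocks (s.filter (fun z => z < e)) (((b \ s).filter (fun z => z < e)).sort (· ≤ ·))
          ++ epBlocks (s.filter (fun z => e < z)) (((b \ s).filter (fun z => e < z)).sort (· ≤ ·)) := by
        rw [EP, sort_split hesb, epBlocks_split]
        intro x hx
        rw [Finset.mem_sort, Finset.mem_filter] at hx
        exact hx.2
      -- first chunk
      have hc1a : s ∩ (t.filter (fun z => z < e)) = s.filter (fun z => z < e) := by
        ext z
        simp only [Finset.mem_inter, Finset.mem_filter]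
        have : z ∈ s → z ∈ t := fun h => hst h
        tauto
      have hc1b : (t.filter (fun z => z < e)) \ (s.filter (fun z => z < e))
          = (b \ s).filter (fun z => z < e) := by
        ext z
        simp only [Finset.mem_sdiff, Finset.mem_filter]
        constructor
        · rintro ⟨⟨hzt, hlt⟩, h⟩
          refine ⟨⟨htb hzt, fun hzs => h ⟨hzs, hlt⟩⟩, hlt⟩
        · rintro ⟨⟨hzb, hzs⟩, hlt⟩
          have hzt : z ∈ t := by
            by_contra hzt
            have := hemin z (Finset.mem_sdiff.2 ⟨hzb, hzt⟩)
            omega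
          exact ⟨⟨hzt, hlt⟩, fun hc => hzs hc.1⟩
      have hchunk1 : EP (t.filter (fun z => z < e)) (s ∩ (t.filter (fun z => z < e)))
          = epBlocks (s.filter (fun z => z < e))
              (((b \ s).filter (fun z => z < e)).sort (· ≤ ·)) := by
        rw [EP, hc1a, hc1b]
      -- second chunk via IH
      have hbt' : (b.filter (fun z => e < z)) \ (t.filter (fun z => e < z)) = (b \ t).erase e := by
        ext z
        simp only [Finset.mem_sdiff, Finset.mem_filter, Finset.mem_erase]
        constructor
        · rintro ⟨⟨hzb, hlt⟩, h⟩
          exact ⟨by omega, hzb, fun hzt => h ⟨hzt, hlt⟩⟩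
        · rintro ⟨hne', hzb, hzt⟩
          have := hemin z (Finset.mem_sdiff.2 ⟨hzb, hzt⟩)
          exact ⟨⟨hzb, by omega⟩, fun hc => hzt hc.1⟩
      have hcard' : ((b.filter (fun z => e < z)) \ (t.filter (fun z => e < z))).card < n := by
        rw [hbt', ← hcard]
        exact Finset.card_erase_lt_of_mem heMem
      have hih := ih _ hcard' (b.filter (fun z => e < z)) (t.filter (fun z => e < z))
        (s.filter (fun z => e < z)) rfl
        (fun z hz => by
          rw [Finset.mem_filter] at hz ⊢; exact ⟨hst hz.1, hz.2⟩)
        (fun z hz => by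
          rw [Finset.mem_filter] at hz ⊢; exact ⟨htb hz.1, hz.2⟩)
      have hbs' : (b.filter (fun z => e < z)) \ (s.filter (fun z => e < z))
          = (b \ s).filter (fun z => e < z) := by
        ext z
        simp only [Finset.mem_sdiff, Finset.mem_filter]
        tauto
      -- rewrite the flatMap in hih blockwise
      have hflml : ∀ blk ∈ epBlocks (t.filter (fun z => e < z)) (((b \ t).erase e).sort (· ≤ ·)),
          (s.filter (fun z => e < z)) ∩ blk = s ∩ blk := by
        intro blk hblk
        have hsub : blk ⊆ t.filter (fun z => e < z) := epBlocks_subset _ _ blk hblk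
        ext z
        simp only [Finset.mem_inter, Finset.mem_filter]
        constructor
        · rintro ⟨⟨h1, _⟩, h2⟩; exact ⟨h1, h2⟩
        · rintro ⟨h1, h2⟩
          have := Finset.mem_filter.1 (hsub h2)
          exact ⟨⟨h1, this.2⟩, h2⟩
      rw [hsplit, hEPbt, List.flatMap_cons, ← hchunk1]
      congr 1
      have : EP (b.filter (fun z => e < z)) (s.filter (fun z => e < z))
          = epBlocks (s.filter (fun z => e < z))
            (((b \ s).filter (fun z => e < z)).sort (· ≤ ·)) := by
        rw [EP, hbs']
      rw [← this, hih]
      have hEPbt' : EP (b.filter (fun z => e < z)) (t.filter (fun z => e < z))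
          = epBlocks (t.filter (fun z => e < z)) (((b \ t).erase e).sort (· ≤ ·)) := by
        rw [EP, hbt']
      rw [hEPbt']
      apply List.flatMap_congr
      intro blk hblk
      rw [hflml blk hblk]

end Part3
section Part4

/-- `B₀ ∪ ⋯ ∪ B_{k-1}` -/
def sB (c : Bip) (k : ℕ) : Finset ℕ := listUnion ((c.take k).map Prod.snd)

/-- `A₀ ∪ ⋯ ∪ A_{k-1}` -/
def sA (c : Bip) (k : ℕ) : Finset ℕ := listUnion ((c.take k).map Prod.fst)

/-- `B_k ∪ ⋯ ∪ B_{r-1}` -/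
def tB (c : Bip) (k : ℕ) : Finset ℕ := listUnion ((c.drop k).map Prod.snd)

/-- entry of the transverse column factor -/
def colEnt (c : Bip) (k : ℕ) (bi : Finset ℕ) : Bip :=
  (c.take k).map fun x => (x.1, x.2 ∩ bi)

lemma transColumn_eq (b : Finset ℕ) (c : Bip) (lam : ℕ) :
    transColumn b c lam = (EP b (sB c lam)).map (colEnt c lam) := rfl

lemma getD_take' {α : Type*} (l : List α) (d : α) {t n : ℕ} (ht : t < n) (hn : t < l.length) :
    (l.take n).getD t d = l.getD t d := by
  rw [List.getD_eq_getElem _ _ (by simp; omega), List.getD_eq_getElem _ _ hn, List.getElem_take]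

lemma sB_subset {b : Finset ℕ} {c : Bip} (hbu : listUnion (c.map Prod.snd) = b) (k : ℕ) :
    sB c k ⊆ b := by
  rw [sB, List.map_take, ← hbu]
  exact listUnion_take_subset _ _

lemma sB_mono (c : Bip) {k m : ℕ} (h : k ≤ m) : sB c k ⊆ sB c m := by
  rw [sB, sB]
  have ht : c.take k = (c.take m).take k := by rw [List.take_take, Nat.min_eq_left h]
  rw [ht, List.map_take]
  exact listUnion_take_subset _ _

lemma blockB_subset_sB {c : Bip} {k : ℕ} (hk : k < c.length) :
    (c.getD k (∅, ∅)).2 ⊆ sB c (k + 1) := by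
  have h1 : k < (c.take (k+1)).length := by
    simp only [List.length_take]; omega
  have h2 : (c.take (k+1)).getD k (∅, ∅) = c.getD k (∅, ∅) :=
    getD_take' _ _ (Nat.lt_succ_self k) hk
  rw [sB]
  apply subset_listUnion
  rw [← h2]
  have := getD_mem' ((c.take (k+1)).map Prod.snd) ∅ (by rw [List.length_map]; exact h1)
  rwa [getD_map' _ _ _ (∅, ∅) h1] at this

lemma blockB_subset_tB {c : Bip} {k : ℕ} (hk : k < c.length) :
    (c.getD k (∅, ∅)).2 ⊆ tB c k := by
  rw [tB]
  apply subset_listUnion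
  rw [List.drop_eq_getElem_cons hk, List.map_cons, List.getD_eq_getElem _ _ hk]
  exact List.mem_cons_self

lemma b_sdiff_sB {b : Finset ℕ} {c : Bip} (hpd : (c.map Prod.snd).Pairwise Disjoint)
    (hbu : listUnion (c.map Prod.snd) = b) (k : ℕ) :
    b \ sB c k = tB c k := by
  rw [← hbu, sB, tB, List.map_take, List.map_drop]
  exact listUnion_sdiff_take _ hpd k

lemma tB_sdiff_block {c : Bip} (hpd : (c.map Prod.snd).Pairwise Disjoint) {k : ℕ}
    (hk : k < c.length) :
    tB c k \ (c.getD k (∅, ∅)).2 = tB c (k + 1) := by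
  have hd : (c.map Prod.snd).drop k = (c.getD k (∅,∅)).2 :: (c.map Prod.snd).drop (k+1) := by
    rw [List.drop_eq_getElem_cons (by simpa using hk)]
    congr 1
    rw [List.getD_eq_getElem _ _ hk]
    simp
  have hpd' : ((c.map Prod.snd).drop k).Pairwise Disjoint := List.Pairwise.sublist (List.drop_sublist _ _) hpd
  rw [hd, List.pairwise_cons] at hpd'
  have hsplit : tB c k = (c.getD k (∅,∅)).2 ∪ listUnion ((c.map Prod.snd).drop (k+1)) := by
    rw [tB, List.map_drop, hd, listUnion_cons]
  have htB1 : tB c (k+1) = listUnion ((c.map Prod.snd).drop (k+1)) := by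
    rw [tB, List.map_drop]
  rw [hsplit, htB1]
  exact Finset.union_sdiff_cancel_left (disjoint_listUnion_right hpd'.1)

lemma blockB_subset_sB' {c : Bip} {t lam : ℕ} (ht : t < lam) (hlen : t < c.length) :
    (c.getD t (∅, ∅)).2 ⊆ sB c lam := by
  refine (blockB_subset_sB hlen).trans (sB_mono c (by omega))

lemma blockA_subset_sA {c : Bip} {t lam : ℕ} (ht : t < lam) (hlen : t < c.length) :
    (c.getD t (∅, ∅)).1 ⊆ sA c lam := by
  apply subset_listUnion
  have h1 : t < ((c.take lam).map Prod.fst).length := by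
    simp only [List.length_map, List.length_take]; omega
  have := getD_mem' ((c.take lam).map Prod.fst) ∅ h1
  convert this using 1
  rw [getD_map' _ _ _ (∅, ∅) (by simp only [List.length_take]; omega)]
  congr 1
  rw [getD_take' _ _ ht hlen]

/-- reconstruction: the product of the transverse decomposition is the original -/
lemma tpProd_trans {a b : Finset ℕ} {c : Bip} (hc : IsBipartition a b c) {lam : ℕ}
    (hlam : lam < c.length) :
    tpProd (transColumn b c lam) (transRow a c lam) = c := by
  obtain ⟨hne, ⟨hpdA, huA⟩, ⟨hpdB, huB⟩⟩ := hc
  have hEPb := EP_ne b (sB c lam)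
  have hEPa := EP_ne a (listUnion ((c.drop lam).map Prod.fst))
  -- head of transColumn
  obtain ⟨blk0, rest, hEPeq⟩ : ∃ blk0 rest, EP b (sB c lam) = blk0 :: rest := by
    cases h : EP b (sB c lam) with
    | nil => exact absurd h hEPb
    | cons x xs => exact ⟨x, xs, rfl⟩
  obtain ⟨ablk0, arest, hEPaeq⟩ : ∃ x xs, EP a (listUnion ((c.drop lam).map Prod.fst)) = x :: xs := by
    cases h : EP a (listUnion ((c.drop lam).map Prod.fst)) with
    | nil => exact absurd h hEPa
    | cons x xs => exact ⟨x, xs, rfl⟩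
  have hheadC : (transColumn b c lam).headD [] = colEnt c lam blk0 := by
    rw [transColumn_eq, hEPeq]; rfl
  have hlenC : ((transColumn b c lam).headD []).length = lam := by
    rw [hheadC, colEnt, List.length_map, List.length_take]; omega
  have hheadR : (transRow a c lam).headD [] = (c.drop lam).map fun x => (x.1 ∩ ablk0, x.2) := by
    rw [transRow, hEPaeq]; rfl
  have hlenR : ((transRow a c lam).headD []).length = c.length - lam := by
    rw [hheadR, List.length_map, List.length_drop]
  rw [tpProd, hlenC, hlenR]
  have hfirst : (List.range lam).map (fun t =>
      ((((transColumn b c lam).headD []).getD t (∅, ∅)).1,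
        listUnion ((transColumn b c lam).map fun e => (e.getD t (∅, ∅)).2))) = c.take lam := by
    rw [← take_eq_range_map_getD c (∅, ∅) (le_of_lt hlam)]
    apply List.map_congr_left
    intro t ht
    rw [List.mem_range] at ht
    have htlen : t < c.length := lt_trans ht hlam
    have htake : t < (c.take lam).length := by simp only [List.length_take]; omega
    have h1 : (((transColumn b c lam).headD []).getD t (∅, ∅)).1 = (c.getD t (∅, ∅)).1 := by
      rw [hheadC, colEnt, getD_map' _ _ _ (∅, ∅) htake, getD_take' _ _ ht htlen]
    have h2 : listUnion ((transColumn b c lam).map fun e => (e.getD t (∅, ∅)).2)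
        = (c.getD t (∅, ∅)).2 := by
      rw [transColumn_eq, List.map_map]
      have : ((EP b (sB c lam)).map ((fun e => (e.getD t (∅, ∅)).2) ∘ colEnt c lam))
          = (EP b (sB c lam)).map ((c.getD t (∅, ∅)).2 ∩ ·) := by
        apply List.map_congr_left
        intro blk _
        show ((colEnt c lam blk).getD t (∅, ∅)).2 = _
        rw [colEnt, getD_map' _ _ _ (∅, ∅) htake, getD_take' _ _ ht htlen]
      rw [this, listUnion_inter', EP_union]
      exact Finset.inter_eq_left.2 (blockB_subset_sB' ht htlen)
    rw [h1, h2]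
  have hsecond : (List.range (c.length - lam)).map (fun t =>
      (listUnion ((transRow a c lam).map fun e => (e.getD t (∅, ∅)).1),
        (((transRow a c lam).headD []).getD t (∅, ∅)).2)) = c.drop lam := by
    have hldrop : (c.drop lam).length = c.length - lam := List.length_drop
    have hteq : (List.range ((c.drop lam).length)).map (fun t => (c.drop lam).getD t (∅, ∅))
        = c.drop lam := by
      rw [take_eq_range_map_getD _ _ (le_refl _), List.take_length]
    rw [← hldrop]
    conv_rhs => rw [← hteq]
    apply List.map_congr_left
    intro t ht
    rw [List.mem_range] at ht
    have htd : t < (c.drop lam).length := by omega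
    have h2 : (((transRow a c lam).headD []).getD t (∅, ∅)).2 = ((c.drop lam).getD t (∅, ∅)).2 := by
      rw [hheadR, getD_map' _ _ _ (∅, ∅) htd]
    have h1 : listUnion ((transRow a c lam).map fun e => (e.getD t (∅, ∅)).1)
        = ((c.drop lam).getD t (∅, ∅)).1 := by
      rw [transRow, List.map_map]
      have : ((EP a (listUnion ((c.drop lam).map Prod.fst))).map
          ((fun e => (e.getD t (∅, ∅)).1) ∘ fun aj => (c.drop lam).map fun x => (x.1 ∩ aj, x.2)))
          = (EP a (listUnion ((c.drop lam).map Prod.fst))).map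
            (((c.drop lam).getD t (∅, ∅)).1 ∩ ·) := by
        apply List.map_congr_left
        intro blk _
        show (((c.drop lam).map (fun x => (x.1 ∩ blk, x.2))).getD t (∅, ∅)).1 = _
        rw [getD_map' _ _ _ (∅, ∅) htd]
      rw [this, listUnion_inter', EP_union]
      apply Finset.inter_eq_left.2
      apply subset_listUnion
      have h3 : t < ((c.drop lam).map Prod.fst).length := by simpa using htd
      have := getD_mem' ((c.drop lam).map Prod.fst) ∅ h3
      rwa [getD_map' _ _ _ (∅, ∅) htd] at this
    rw [h1, h2]
  rw [hfirst, hsecond, List.take_append_drop]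

end Part4
section Part5

lemma take_one_eq {c : Bip} (hne : c ≠ []) : c.take 1 = [c.getD 0 (∅, ∅)] := by
  cases c with
  | nil => exact absurd rfl hne
  | cons x xs => rfl

lemma take_drop_singleton {c : Bip} {j : ℕ} (hj : j < c.length) :
    (c.take (j+1)).drop j = [c.getD j (∅, ∅)] := by
  rw [List.getD_eq_getElem _ _ hj, List.drop_take, List.drop_eq_getElem_cons hj]
  have h1 : j + 1 - j = 1 := by omega
  rw [h1]
  rfl

lemma map_fst_colEnt (c : Bip) (m : ℕ) (blk : Finset ℕ) :
    (colEnt c m blk).map Prod.fst = (c.map Prod.fst).take m := by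
  rw [colEnt, List.map_map, ← List.map_take]
  rfl

lemma map_snd_colEnt (c : Bip) (m : ℕ) (blk : Finset ℕ) :
    (colEnt c m blk).map Prod.snd = ((c.take m).map Prod.snd).map (· ∩ blk) := by
  rw [colEnt, List.map_map, List.map_map]
  rfl

lemma bipOS_colEnt (c : Bip) (m : ℕ) {blk : Finset ℕ} (hblk : blk ⊆ sB c m) :
    bipOS (colEnt c m blk) = blk := by
  rw [bipOS, map_snd_colEnt, listUnion_inter]
  exact Finset.inter_eq_right.2 hblk

lemma bipIS_colEnt (c : Bip) (m : ℕ) (blk : Finset ℕ) :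
    bipIS (colEnt c m blk) = sA c m := by
  rw [bipIS, map_fst_colEnt, sA, List.map_take]

lemma colEnt_bipartition {c : Bip} (hpdA : (c.map Prod.fst).Pairwise Disjoint)
    (hpdB : (c.map Prod.snd).Pairwise Disjoint) {m : ℕ} (hm : 1 ≤ m) (hne : c ≠ [])
    {blk : Finset ℕ} (hblk : blk ⊆ sB c m) :
    IsBipartition (sA c m) blk (colEnt c m blk) := by
  refine ⟨?_, ⟨?_, ?_⟩, ⟨?_, ?_⟩⟩
  · apply List.ne_nil_of_length_pos
    rw [colEnt, List.length_map, List.length_take]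
    have : 0 < c.length := List.length_pos_iff.2 hne
    omega
  · rw [map_fst_colEnt]
    exact List.Pairwise.sublist (List.take_sublist _ _) hpdA
  · rw [map_fst_colEnt, sA, List.map_take]
  · rw [map_snd_colEnt]
    have hp : ((c.take m).map Prod.snd).Pairwise Disjoint := by
      rw [List.map_take]
      exact List.Pairwise.sublist (List.take_sublist _ _) hpdB
    exact hp.map _ (fun {s t} hst => hst.mono Finset.inter_subset_left Finset.inter_subset_left)
  · rw [map_snd_colEnt, listUnion_inter]
    exact Finset.inter_eq_right.2 hblk

/-- E1: the transverse column factor of a merged entry is the chunk of fine entries -/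
lemma transColumn_colEnt (c : Bip) {k m : ℕ} (hkm : k ≤ m) (blk : Finset ℕ) :
    transColumn blk (colEnt c m blk) k = (EP blk (sB c k ∩ blk)).map (colEnt c k) := by
  have htake : (colEnt c m blk).take k = (c.take k).map (fun x => (x.1, x.2 ∩ blk)) := by
    rw [colEnt, ← List.map_take, List.take_take, Nat.min_eq_left hkm]
  have hsB : sB (colEnt c m blk) k = sB c k ∩ blk := by
    rw [sB, htake, List.map_map]
    show listUnion ((c.take k).map fun x => x.2 ∩ blk) = _
    have : (c.take k).map (fun x => x.2 ∩ blk) = ((c.take k).map Prod.snd).map (· ∩ blk) := by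
      rw [List.map_map]; rfl
    rw [this, listUnion_inter]; rfl
  rw [transColumn_eq, hsB]
  apply List.map_congr_left
  intro bst hbst
  have hbst' : bst ⊆ blk := (EP_subset bst hbst).trans Finset.inter_subset_right
  rw [colEnt, htake, List.map_map, colEnt]
  apply List.map_congr_left
  intro x _
  show (x.1, (x.2 ∩ blk) ∩ bst) = (x.1, x.2 ∩ bst)
  rw [Finset.inter_assoc, Finset.inter_eq_right.2 hbst']

/-- E4: flatten the fine transverse column along a coarser one -/
lemma transColumn_flatten (b : Finset ℕ) (c : Bip) {k m : ℕ} (hkm : k ≤ m)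
    (hsub : sB c m ⊆ b) :
    transColumn b c k
      = (EP b (sB c m)).flatMap (fun blk => (EP blk (sB c k ∩ blk)).map (colEnt c k)) := by
  rw [transColumn_eq, EP_group ((b \ sB c m).card) b (sB c m) (sB c k) rfl (sB_mono c hkm) hsub,
    List.map_flatMap]

/-- E2c: intersecting coarse blocks with the `j`-th numerator block -/
lemma EP_inter_block {b : Finset ℕ} {c : Bip} (hpdB : (c.map Prod.snd).Pairwise Disjoint)
    (hbu : listUnion (c.map Prod.snd) = b) {j : ℕ} (hj : j < c.length) :
    (EP b (sB c (j+1))).map (· ∩ (c.getD j (∅, ∅)).2)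
      = EP (tB c j) ((c.getD j (∅, ∅)).2) := by
  have hcut1 : b \ sB c (j+1) = tB c (j+1) := b_sdiff_sB hpdB hbu _
  have hcut2 : tB c j \ (c.getD j (∅, ∅)).2 = tB c (j+1) := tB_sdiff_block hpdB hj
  have hBsub : (c.getD j (∅, ∅)).2 ⊆ sB c (j+1) := blockB_subset_sB hj
  rw [EP, EP, hcut1, hcut2, epBlocks_inter, Finset.inter_eq_right.2 hBsub]

/-- E2a -/
lemma transRow_colEnt {c : Bip} {k : ℕ} (hk : k + 1 < c.length) (blk : Finset ℕ) :
    transRow (sA c (k+2)) (colEnt c (k+2) blk) (k+1)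
      = (EP (sA c (k+2)) ((c.getD (k+1) (∅, ∅)).1)).map
          (fun aj => [(aj, (c.getD (k+1) (∅, ∅)).2 ∩ blk)]) := by
  have hdrop : (colEnt c (k+2) blk).drop (k+1)
      = [((c.getD (k+1) (∅, ∅)).1, (c.getD (k+1) (∅, ∅)).2 ∩ blk)] := by
    rw [colEnt, ← List.map_drop, take_drop_singleton hk]
    rfl
  rw [transRow, hdrop]
  have hU : listUnion ([((c.getD (k+1) (∅, ∅)).1, (c.getD (k+1) (∅, ∅)).2 ∩ blk)].map Prod.fst)
      = (c.getD (k+1) (∅, ∅)).1 := by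
    simp [listUnion_cons]
  rw [hU]
  apply List.map_congr_left
  intro aj haj
  have : aj ⊆ (c.getD (k+1) (∅, ∅)).1 := EP_subset aj haj
  show [((c.getD (k+1) (∅, ∅)).1 ∩ aj, (c.getD (k+1) (∅, ∅)).2 ∩ blk)] = _
  rw [Finset.inter_eq_right.2 this]

/-- E2b -/
lemma elemFactor_eq (c : Bip) (k : ℕ) :
    elemFactor c k = (EP (tB c k) ((c.getD k (∅, ∅)).2)).map
      (fun bi => (EP (sA c (k+1)) ((c.getD k (∅, ∅)).1)).map (fun aj => [(aj, bi)])) := rfl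

/-- E2: the transverse row factor of a merged entry is the `i`-th row of the
elementary factor -/
lemma transRow_eq_elemRow {b : Finset ℕ} {c : Bip} (hpdB : (c.map Prod.snd).Pairwise Disjoint)
    (hbu : listUnion (c.map Prod.snd) = b) {k i : ℕ} (hk : k + 1 < c.length)
    (hi : i < (EP b (sB c (k+2))).length) :
    transRow (sA c (k+2)) (colEnt c (k+2) ((EP b (sB c (k+2))).getD i ∅)) (k+1)
      = (elemFactor c (k+1)).getD i [] := by
  have hrows := EP_inter_block hpdB hbu hk
  have hlen : i < (EP (tB c (k+1)) ((c.getD (k+1) (∅, ∅)).2)).length := by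
    rw [← hrows, List.length_map]; exact hi
  rw [transRow_colEnt hk, elemFactor_eq, getD_map' _ _ _ ∅ hlen]
  congr 1
  rw [← hrows, getD_map' _ _ _ ∅ hi, Finset.inter_comm]

/-- the last partial product is the bipartition itself -/
lemma transColumn_last {b : Finset ℕ} {c : Bip}
    (hbu : listUnion (c.map Prod.snd) = b) :
    transColumn b c c.length = [c] := by
  have hsB : sB c c.length = b := by rw [sB, List.take_length, hbu]
  rw [transColumn_eq, hsB, EP_self]
  have : colEnt c c.length b = c := by
    rw [colEnt, List.take_length]
    have : c.map (fun x => (x.1, x.2 ∩ b)) = c.map id := by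
      apply List.map_congr_left
      intro x hx
      have hx2 : x.2 ⊆ b := by
        rw [← hbu]
        exact subset_listUnion (List.mem_map_of_mem (f := Prod.snd) hx)
      show (x.1, x.2 ∩ b) = x
      rw [Finset.inter_eq_left.2 hx2]
    rw [this, List.map_id]
  rw [List.map_cons, List.map_nil, this]

/-- the first factor: `D₀ = C₁` -/
lemma transColumn_one {b : Finset ℕ} {c : Bip} (hne : c ≠ [])
    (hbu : listUnion (c.map Prod.snd) = b) :
    (transColumn b c 1).map (fun e => [e]) = elemFactor c 0 := by
  have htB0 : tB c 0 = b := by rw [tB, List.drop_zero, hbu]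
  have hsB1 : sB c 1 = (c.getD 0 (∅, ∅)).2 := by
    rw [sB, take_one_eq hne]
    show (c.getD 0 (∅, ∅)).2 ∪ ∅ = _
    rw [Finset.union_empty]
  have hsA1 : sA c 1 = (c.getD 0 (∅, ∅)).1 := by
    rw [sA, take_one_eq hne]
    show (c.getD 0 (∅, ∅)).1 ∪ ∅ = _
    rw [Finset.union_empty]
  rw [elemFactor_eq, htB0, hsA1, EP_self, transColumn_eq, hsB1, List.map_map]
  apply List.map_congr_left
  intro blk hblk
  have hsub : blk ⊆ (c.getD 0 (∅, ∅)).2 := EP_subset blk hblk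
  show [colEnt c 1 blk] = [(c.getD 0 (∅, ∅)).1].map (fun aj => [(aj, blk)])
  have : colEnt c 1 blk = [((c.getD 0 (∅, ∅)).1, blk)] := by
    rw [colEnt, take_one_eq hne]
    show [((c.getD 0 (∅, ∅)).1, (c.getD 0 (∅, ∅)).2 ∩ blk)] = _
    rw [Finset.inter_eq_right.2 hsub]
  rw [this]
  rfl

end Part5
section Part6

lemma pairwise_getD_disjoint {L : List (Finset ℕ)} (h : L.Pairwise Disjoint) {i j : ℕ}
    (hi : i < L.length) (hj : j < L.length) (hne : i ≠ j) :
    Disjoint (L.getD i ∅) (L.getD j ∅) := by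
  rw [List.getD_eq_getElem _ _ hi, List.getD_eq_getElem _ _ hj]
  rw [List.pairwise_iff_getElem] at h
  rcases Nat.lt_or_ge i j with hlt | hge
  · exact h i j hi hj hlt
  · exact (h j i hj hi (by omega)).symm

lemma entry_mapmap {R Cl : List (Finset ℕ)} {f : Finset ℕ → Finset ℕ → Bip} {i j : ℕ}
    (hi : i < R.length) (hj : j < Cl.length) :
    entry (R.map (fun bi => Cl.map (fun aj => f aj bi))) i j
      = f (Cl.getD j ∅) (R.getD i ∅) := by
  rw [entry, getD_map' _ _ _ ∅ hi, getD_map' _ _ _ ∅ hj]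

lemma wid_mapmap {R Cl : List (Finset ℕ)} {f : Finset ℕ → Finset ℕ → Bip} (hR : R ≠ []) :
    wid (R.map (fun bi => Cl.map (fun aj => f aj bi))) = Cl.length := by
  cases R with
  | nil => exact absurd rfl hR
  | cons r rest => simp [wid]

lemma elemFactor_length (c : Bip) (k : ℕ) :
    (elemFactor c k).length = (EP (tB c k) ((c.getD k (∅, ∅)).2)).length := by
  rw [elemFactor_eq, List.length_map]

lemma elemFactor_wid (c : Bip) (k : ℕ) :
    wid (elemFactor c k) = (EP (sA c (k+1)) ((c.getD k (∅, ∅)).1)).length := by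
  rw [elemFactor_eq]
  exact wid_mapmap (EP_ne _ _)

lemma elemFactor_entry (c : Bip) (k : ℕ) {i j : ℕ}
    (hi : i < (elemFactor c k).length) (hj : j < wid (elemFactor c k)) :
    entry (elemFactor c k) i j
      = [((EP (sA c (k+1)) ((c.getD k (∅, ∅)).1)).getD j ∅,
          (EP (tB c k) ((c.getD k (∅, ∅)).2)).getD i ∅)] := by
  rw [elemFactor_length] at hi
  rw [elemFactor_wid] at hj
  rw [elemFactor_eq]
  exact entry_mapmap hi hj

lemma elemFactor_isElemMat (c : Bip) (k : ℕ) : IsElemMat (elemFactor c k) :=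
  ⟨EP (sA c (k+1)) ((c.getD k (∅, ∅)).1), EP (tB c k) ((c.getD k (∅, ∅)).2), rfl⟩

lemma elemFactor_isBipMat (c : Bip) (k : ℕ) : IsBipMat (elemFactor c k) := by
  set Cl := EP (sA c (k+1)) ((c.getD k (∅, ∅)).1) with hCl
  set R := EP (tB c k) ((c.getD k (∅, ∅)).2) with hR
  have hRne : R ≠ [] := EP_ne _ _
  have hClne : Cl ≠ [] := EP_ne _ _
  have hwid : wid (elemFactor c k) = Cl.length := elemFactor_wid c k
  have hlen : (elemFactor c k).length = R.length := elemFactor_length c k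
  have hClpos : 0 < Cl.length := List.length_pos_iff.2 hClne
  have hRpos : 0 < R.length := List.length_pos_iff.2 hRne
  constructor
  · rw [elemFactor_eq, ← hCl, ← hR]
    exact fun h => hRne (List.map_eq_nil_iff.1 h)
  · obtain ⟨r, rest, hReq⟩ : ∃ r rest, R = r :: rest := by
      cases hR' : R with
      | nil => exact absurd hR' hRne
      | cons x xs => exact ⟨x, xs, rfl⟩
    rw [elemFactor_eq, ← hCl, ← hR, hReq]
    show Cl.map _ ≠ []
    exact fun h => hClne (List.map_eq_nil_iff.1 h)
  · intro row hrow
    rw [elemFactor_eq, ← hCl, ← hR, List.mem_map] at hrow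
    obtain ⟨bi, _, rfl⟩ := hrow
    rw [List.length_map, hwid]
  · intro row hrow e he
    rw [elemFactor_eq, ← hCl, ← hR, List.mem_map] at hrow
    obtain ⟨bi, _, rfl⟩ := hrow
    rw [List.mem_map] at he
    obtain ⟨aj, _, rfl⟩ := he
    exact List.cons_ne_nil _ _
  · intro i j hi hj
    rw [elemFactor_entry c k hi (by rw [hwid]; exact hClpos),
      elemFactor_entry c k hi hj]
    constructor
    · simp
    · show listUnion [R.getD i ∅] = bipOS [(Cl.getD 0 ∅, R.getD i ∅)]
      rfl
  · intro i j hi hj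
    rw [elemFactor_entry c k (by rw [hlen]; exact hRpos) hj,
      elemFactor_entry c k hi hj]
    constructor
    · simp
    · show listUnion [Cl.getD j ∅] = bipIS [(Cl.getD j ∅, R.getD 0 ∅)]
      rfl
  · intro j j' hj hj' hne
    rw [elemFactor_entry c k (by rw [hlen]; exact hRpos) hj,
      elemFactor_entry c k (by rw [hlen]; exact hRpos) hj']
    show Disjoint (listUnion [Cl.getD j ∅]) (listUnion [Cl.getD j' ∅])
    have hclp : Cl.Pairwise Disjoint := EP_pairwise _ _
    have := pairwise_getD_disjoint hclp
      (by rw [← hwid]; exact hj) (by rw [← hwid]; exact hj') hne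
    simpa [listUnion_cons, Finset.union_empty] using this
  · intro i i' hi hi' hne
    rw [elemFactor_entry c k hi (by rw [hwid]; exact hClpos),
      elemFactor_entry c k hi' (by rw [hwid]; exact hClpos)]
    show Disjoint (listUnion [R.getD i ∅]) (listUnion [R.getD i' ∅])
    have hrp : R.Pairwise Disjoint := EP_pairwise _ _
    have := pairwise_getD_disjoint hrp
      (by rw [← hlen]; exact hi) (by rw [← hlen]; exact hi') hne
    simpa [listUnion_cons, Finset.union_empty] using this

end Part6
section Part7

lemma wid_mapSingleton {L : List Bip} (hL : L ≠ []) :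
    wid (L.map (fun e => [e])) = 1 := by
  cases L with
  | nil => exact absurd rfl hL
  | cons x xs => rfl

lemma entry_mapSingleton (L : List Bip) {i : ℕ} (hi : i < L.length) :
    entry (L.map (fun e => [e])) i 0 = L.getD i [] := by
  rw [entry, getD_map' _ _ _ [] hi]
  rfl

lemma colBlock_mapSingleton (L : List Bip) (off h : ℕ) :
    colBlock (L.map (fun e => [e])) off h 0 = (L.drop off).take h := by
  rw [colBlock, ← List.map_drop, ← List.map_take, List.map_map]
  show List.map (fun e => [e].getD 0 []) _ = _
  simp

/-- Main chain step: `D_k ⋅ C_{k+1} = D_{k+1}` as a block transverse product. -/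
theorem chainStep {a b : Finset ℕ} {c : Bip} (hc : IsBipartition a b c) {k : ℕ}
    (hk : k + 2 ≤ c.length) :
    IsBTPProd ((transColumn b c (k+1)).map (fun e => [e])) (elemFactor c (k+1))
      ((transColumn b c (k+2)).map (fun e => [e])) := by
  obtain ⟨hne, ⟨hpdA, huA⟩, ⟨hpdB, huB⟩⟩ := hc
  have hk1 : k + 1 < c.length := by omega
  set coarse := EP b (sB c (k+2)) with hcoarse
  set chunkfun : Finset ℕ → List Bip :=
    (fun blk => (EP blk (sB c (k+1) ∩ blk)).map (colEnt c (k+1))) with hchunkfun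
  set cs := coarse.map chunkfun with hcs
  set qs := cs.map List.length with hqs
  have hflat : transColumn b c (k+1) = cs.flatten := by
    rw [hcs, ← List.flatMap_def]
    exact transColumn_flatten b c (by omega) (sB_subset huB _)
  have hcoarse_len : coarse.length = (elemFactor c (k+1)).length := by
    rw [elemFactor_length, ← EP_inter_block hpdB huB hk1, List.length_map]
  have hrowlen : ∀ i, i < coarse.length →
      (EP (tB c (k+1)) ((c.getD (k+1) (∅, ∅)).2)).getD i ∅
        = coarse.getD i ∅ ∩ (c.getD (k+1) (∅, ∅)).2 := by
    intro i hi
    rw [← EP_inter_block hpdB huB hk1, getD_map' _ _ _ ∅ hi]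
  have hAlen : ((transColumn b c (k+1)).map (fun e => [e])).length = qs.sum := by
    rw [List.length_map, hflat, List.length_flatten, hqs]
  have hwidA : wid ((transColumn b c (k+1)).map (fun e => [e])) = 1 :=
    wid_mapSingleton (by
      rw [transColumn_eq]
      exact fun h => EP_ne _ _ (List.map_eq_nil_iff.1 h))
  refine ⟨qs, [wid (elemFactor c (k+1))], ?_, ?_, ?_, ?_, ?_, ?_, ?_, ?_, ?_⟩
  · rw [hqs, hcs, List.length_map, List.length_map, hcoarse_len]
  · rw [hwidA]; rfl
  · rw [hAlen]
  · rw [List.sum_cons, List.sum_nil]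
    exact Nat.add_zero _
  · intro x hx
    rw [hqs, hcs, List.map_map, List.mem_map] at hx
    obtain ⟨blk, _, rfl⟩ := hx
    show 1 ≤ (chunkfun blk).length
    rw [hchunkfun]
    have := EP_length blk (sB c (k+1) ∩ blk)
    simp only [List.length_map]
    omega
  · intro x hx
    rw [List.mem_singleton] at hx
    subst hx
    rw [elemFactor_wid]
    have := EP_length (sA c (k+1+1)) ((c.getD (k+1) (∅, ∅)).1)
    omega
  · rw [List.length_map, transColumn_eq, List.length_map, ← hcoarse, hcoarse_len]
  · intro row hrow
    rw [List.mem_map] at hrow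
    obtain ⟨e, _, rfl⟩ := hrow
    rw [hwidA]; rfl
  · intro i j hi hj
    rw [hwidA] at hj
    interval_cases j
    have hic : i < coarse.length := by rw [hcoarse_len]; exact hi
    set blk := coarse.getD i ∅ with hblk
    have hblkmem : blk ∈ coarse := getD_mem' _ _ hic
    have hblksub : blk ⊆ sB c (k+2) := EP_subset blk hblkmem
    -- identify the column block
    have hcol : colBlock ((transColumn b c (k+1)).map (fun e => [e])) ((qs.take i).sum)
        (qs.getD i 0) 0 = chunkfun blk := by
      rw [colBlock_mapSingleton, hflat]
      have hq : qs = cs.map List.length := hqs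
      have := flatten_drop_take cs i (by rw [hcs, List.length_map]; exact hic)
      rw [← hq] at this
      rw [this, hcs, getD_map' _ _ _ ∅ hic]
    -- identify the row block
    have hrowB : rowBlock (elemFactor c (k+1)) i ((([wid (elemFactor c (k+1))]).take 0).sum)
        (([wid (elemFactor c (k+1))]).getD 0 0) = (elemFactor c (k+1)).getD i [] := by
      rw [rowBlock]
      have hrowmem : (elemFactor c (k+1)).getD i [] ∈ elemFactor c (k+1) :=
        getD_mem' _ _ (by rw [← hcoarse_len]; exact hic)
      have hrlen := (elemFactor_isBipMat c (k+1)).rect _ hrowmem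
      simp only [List.take_zero, List.sum_nil, List.drop_zero, List.getD_cons_zero]
      exact List.take_of_length_le (le_of_eq hrlen)
    have hbip : IsBipartition (sA c (k+2)) blk (colEnt c (k+2) blk) :=
      colEnt_bipartition hpdA hpdB (by omega) hne hblksub
    have hlamlt : k + 1 < (colEnt c (k+2) blk).length := by
      rw [colEnt, List.length_map, List.length_take]
      omega
    have hAcol : colBlock ((transColumn b c (k+1)).map (fun e => [e])) ((qs.take i).sum)
        (qs.getD i 0) 0 = transColumn blk (colEnt c (k+2) blk) (k+1) := by
      rw [hcol, transColumn_colEnt c (by omega) blk]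
    have hBrow : rowBlock (elemFactor c (k+1)) i 0 (wid (elemFactor c (k+1)))
        = transRow (sA c (k+2)) (colEnt c (k+2) blk) (k+1) := by
      have := transRow_eq_elemRow hpdB huB hk1 hic
      rw [← hblk] at this  -- no-op; blk is set
      rw [show ((([wid (elemFactor c (k+1))]).take 0).sum) = 0 from rfl] at hrowB
      rw [show (([wid (elemFactor c (k+1))]).getD 0 0) = wid (elemFactor c (k+1)) from rfl] at hrowB
      rw [hrowB, ← this]
    constructor
    · exact ⟨sA c (k+2), blk, colEnt c (k+2) blk, k+1, hbip, by omega, hlamlt, hAcol,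
        by rw [← hBrow]; rfl⟩
    · rw [entry_mapSingleton _ (by rw [transColumn_eq, List.length_map, ← hcoarse]; exact hic),
        transColumn_eq, ← hcoarse, getD_map' _ _ _ ∅ hic, ← hblk, hAcol]
      have : rowBlock (elemFactor c (k+1)) i ((([wid (elemFactor c (k+1))]).take 0).sum)
          (([wid (elemFactor c (k+1))]).getD 0 0)
          = transRow (sA c (k+2)) (colEnt c (k+2) blk) (k+1) := hBrow
      rw [this]
      exact (tpProd_trans hbip hlamlt).symm

end Part7
section Part8

lemma EP_restrict {x y t s : Finset ℕ} (hst : s ⊆ t) (hcut : x \ t = y \ s) :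
    (EP x t).map (· ∩ s) = EP y s := by
  rw [EP, EP, hcut, epBlocks_inter, Finset.inter_eq_right.2 hst]

lemma listUnion_sdiff_drop (L : List (Finset ℕ)) (h : L.Pairwise Disjoint) (n : ℕ) :
    listUnion L \ listUnion (L.drop n) = listUnion (L.take n) := by
  have hd : Disjoint (listUnion (L.take n)) (listUnion (L.drop n)) := by
    apply disjoint_listUnion_left
    intro t ht
    apply disjoint_listUnion_right
    intro u hu
    have hp : (L.take n ++ L.drop n).Pairwise Disjoint := by rw [List.take_append_drop]; exact h
    exact (List.pairwise_append.1 hp).2.2 t ht u hu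
  have hU : listUnion L = listUnion (L.take n) ∪ listUnion (L.drop n) := by
    rw [← listUnion_append, List.take_append_drop]
  rw [hU]
  exact Finset.union_sdiff_cancel_right hd

lemma take_drop_pair {c : Bip} {j : ℕ} (hj : j + 1 < c.length) :
    (c.take (j+2)).drop j = [c.getD j (∅, ∅), c.getD (j+1) (∅, ∅)] := by
  rw [List.getD_eq_getElem _ _ (by omega : j < c.length), List.getD_eq_getElem _ _ hj,
    List.drop_take, List.drop_eq_getElem_cons (by omega : j < c.length),
    List.drop_eq_getElem_cons hj]
  have h1 : j + 2 - j = 2 := by omega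
  rw [h1]
  rfl

lemma tB_anti (c : Bip) (k : ℕ) : tB c (k+1) ⊆ tB c k := by
  rcases Nat.lt_or_ge k c.length with hk | hk
  · rw [tB, tB, List.drop_eq_getElem_cons hk, List.map_cons, listUnion_cons]
    exact Finset.subset_union_right
  · rw [tB, tB, List.drop_eq_nil_of_le hk, List.drop_eq_nil_of_le (by omega)]

lemma getD_range {n i : ℕ} (hi : i < n) : (List.range n).getD i 0 = i := by
  rw [List.getD_eq_getElem _ _ (by simpa using hi), List.getElem_range]

lemma flatMap_seg {β : Type*} (L : List (Finset ℕ)) (g : Finset ℕ → List β) {i : ℕ}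
    (hi : i < L.length) :
    ((L.flatMap g).drop (((L.map (fun x => (g x).length)).take i).sum)).take
        ((L.map (fun x => (g x).length)).getD i 0)
      = g (L.getD i ∅) := by
  have hcs := flatten_drop_take (L.map g) i (by simpa using hi)
  rw [List.flatMap_def]
  have hml : (L.map g).map List.length = L.map (fun x => (g x).length) := by
    rw [List.map_map]; rfl
  rw [← hml]
  rw [hcs, getD_map' _ _ _ ∅ hi]

lemma colBlock_mapmap {R Cl : List (Finset ℕ)} {f : Finset ℕ → Finset ℕ → Bip}
    (off h : ℕ) {j : ℕ} (hj : j < Cl.length) :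
    colBlock (R.map (fun bi => Cl.map (fun aj => f aj bi))) off h j
      = ((R.drop off).take h).map (fun bi => f (Cl.getD j ∅) bi) := by
  rw [colBlock, ← List.map_drop, ← List.map_take, List.map_map]
  apply List.map_congr_left
  intro bi _
  show (Cl.map (fun aj => f aj bi)).getD j [] = _
  rw [getD_map' _ _ _ ∅ hj]

lemma rowBlock_mapmap {R Cl : List (Finset ℕ)} {f : Finset ℕ → Finset ℕ → Bip}
    {i : ℕ} (hi : i < R.length) (off w : ℕ) :
    rowBlock (R.map (fun bi => Cl.map (fun aj => f aj bi))) i off w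
      = ((Cl.drop off).take w).map (fun aj => f aj (R.getD i ∅)) := by
  rw [rowBlock, getD_map' _ _ _ ∅ hi, ← List.map_drop, ← List.map_take]

lemma transColumn_pair (b₀ p X q Y : Finset ℕ) :
    transColumn b₀ [(p, X), (q, Y)] 1
      = (EP b₀ (X ∪ ∅)).map (fun bst => [(p, X ∩ bst)]) := rfl

lemma transRow_pair (a₀ p X q Y : Finset ℕ) :
    transRow a₀ [(p, X), (q, Y)] 1
      = (EP a₀ (q ∪ ∅)).map (fun aj => [(q ∩ aj, Y)]) := rfl

/-- The BTP between consecutive elementary factors. -/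
theorem elemFactor_btp {a b : Finset ℕ} {c : Bip} (hc : IsBipartition a b c) {k : ℕ}
    (hk : k + 1 < c.length) :
    IsBTP (elemFactor c k) (elemFactor c (k+1)) := by
  obtain ⟨hne, ⟨hpdA, huA⟩, ⟨hpdB, huB⟩⟩ := hc
  set AA := (c.getD k (∅, ∅)).1 with hAA
  set AB := (c.getD (k+1) (∅, ∅)).1 with hAB
  set BB := (c.getD k (∅, ∅)).2 with hBB
  set BC := (c.getD (k+1) (∅, ∅)).2 with hBC
  set ccoarse := EP (sA c (k+2)) (AA ∪ AB) with hccoarse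
  set rcoarse := EP (tB c k) (BB ∪ BC) with hrcoarse
  set qs := rcoarse.map (fun dd => (EP dd (BB ∩ dd)).length) with hqsdef
  set ps := ccoarse.map (fun cc => (EP cc (AB ∩ cc)).length) with hpsdef
  -- basic disjointness
  have hAdisj : Disjoint AA AB := by
    have := pairwise_getD_disjoint (L := c.map Prod.fst) hpdA
      (by rw [List.length_map]; omega) (by rw [List.length_map]; omega) (by omega : k ≠ k+1)
    rwa [getD_map' _ _ _ (∅, ∅) (by omega), getD_map' _ _ _ (∅, ∅) (by omega)] at this
  have hBdisj : Disjoint BB BC := by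
    have := pairwise_getD_disjoint (L := c.map Prod.snd) hpdB
      (by rw [List.length_map]; omega) (by rw [List.length_map]; omega) (by omega : k ≠ k+1)
    rwa [getD_map' _ _ _ (∅, ∅) (by omega), getD_map' _ _ _ (∅, ∅) (by omega)] at this
  -- cut identities
  have hcutA : sA c (k+2) \ (AA ∪ AB) = sA c (k+1) \ AA := by
    have hpdA2 : ((c.map Prod.fst).take (k+2)).Pairwise Disjoint :=
      List.Pairwise.sublist (List.take_sublist _ _) hpdA
    have hpdA1 : ((c.map Prod.fst).take (k+1)).Pairwise Disjoint :=
      List.Pairwise.sublist (List.take_sublist _ _) hpdA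
    have hd2 : ((c.map Prod.fst).take (k+2)).drop k = [AA, AB] := by
      rw [← List.map_take, ← List.map_drop, take_drop_pair hk]
      rfl
    have hd1 : ((c.map Prod.fst).take (k+1)).drop k = [AA] := by
      rw [← List.map_take, ← List.map_drop, take_drop_singleton (by omega : k < c.length)]
      rfl
    have e2 := listUnion_sdiff_drop _ hpdA2 k
    have e1 := listUnion_sdiff_drop _ hpdA1 k
    rw [hd2] at e2
    rw [hd1] at e1
    rw [List.take_take, Nat.min_eq_left (by omega : k ≤ k+2)] at e2
    rw [List.take_take, Nat.min_eq_left (by omega : k ≤ k+1)] at e1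
    have hU2 : listUnion [AA, AB] = AA ∪ AB := by
      rw [listUnion_cons, listUnion_cons, listUnion_nil, Finset.union_empty]
    have hU1 : listUnion [AA] = AA := by
      rw [listUnion_cons, listUnion_nil, Finset.union_empty]
    rw [hU2] at e2
    rw [hU1] at e1
    have hsA2 : sA c (k+2) = listUnion ((c.map Prod.fst).take (k+2)) := by
      rw [sA, List.map_take]
    have hsA1 : sA c (k+1) = listUnion ((c.map Prod.fst).take (k+1)) := by
      rw [sA, List.map_take]
    rw [hsA2, hsA1, e2, e1]
  have hcutB : tB c k \ (BB ∪ BC) = tB c (k+1) \ BC := by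
    have h4 : tB c (k+1) \ BC = tB c (k+2) := tB_sdiff_block hpdB hk
    have h5 : tB c k \ BB = tB c (k+1) := tB_sdiff_block hpdB (by omega)
    rw [← h5]
    ext z
    simp only [Finset.mem_sdiff, Finset.mem_union]
    tauto
  -- subset facts
  have hABsub : AA ∪ AB ⊆ sA c (k+2) := by
    apply Finset.union_subset
    · exact blockA_subset_sA (by omega) (by omega)
    · exact blockA_subset_sA (by omega) (by omega)
  have hBBsub : BB ∪ BC ⊆ tB c k := by
    apply Finset.union_subset
    · exact blockB_subset_tB (by omega)
    · exact (blockB_subset_tB hk).trans (tB_anti c k)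
  -- grouping identities
  have hcolsK : ccoarse.map (· ∩ AA) = EP (sA c (k+1)) AA :=
    EP_restrict Finset.subset_union_left hcutA
  have hrowsK1 : rcoarse.map (· ∩ BC) = EP (tB c (k+1)) BC :=
    EP_restrict Finset.subset_union_right hcutB
  have hcolsFine : EP (sA c (k+2)) AB = ccoarse.flatMap (fun cc => EP cc (AB ∩ cc)) :=
    EP_group _ _ _ _ rfl Finset.subset_union_right hABsub
  have hrowsFine : EP (tB c k) BB = rcoarse.flatMap (fun dd => EP dd (BB ∩ dd)) :=
    EP_group _ _ _ _ rfl Finset.subset_union_left hBBsub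
  -- dimensions
  have hFklen : (elemFactor c k).length = qs.sum := by
    rw [elemFactor_length, ← hBB, hrowsFine, List.length_flatMap, hqsdef, hrcoarse]
  have hFk1len : (elemFactor c (k+1)).length = qs.length := by
    rw [elemFactor_length, ← hBC, ← hrowsK1, List.length_map, hqsdef, List.length_map]
  have hFkwid : wid (elemFactor c k) = ps.length := by
    rw [elemFactor_wid, ← hAA, ← hcolsK, List.length_map, hpsdef, List.length_map]
  have hFk1wid : wid (elemFactor c (k+1)) = ps.sum := by
    rw [elemFactor_wid, ← hAB]
    show (EP (sA c (k+2)) AB).length = _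
    rw [hcolsFine, List.length_flatMap, hpsdef, hccoarse]
  refine ⟨(List.range qs.length).map (fun i => (List.range ps.length).map (fun j =>
      tpProd (colBlock (elemFactor c k) ((qs.take i).sum) (qs.getD i 0) j)
             (rowBlock (elemFactor c (k+1)) i ((ps.take j).sum) (ps.getD j 0)))),
    qs, ps, hFk1len.symm, hFkwid.symm, hFklen.symm, hFk1wid.symm, ?_, ?_, ?_, ?_, ?_⟩
  · intro x hx
    rw [hqsdef, List.mem_map] at hx
    obtain ⟨dd, _, rfl⟩ := hx
    have := EP_length dd (BB ∩ dd)
    omega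
  · intro x hx
    rw [hpsdef, List.mem_map] at hx
    obtain ⟨cc, _, rfl⟩ := hx
    have := EP_length cc (AB ∩ cc)
    omega
  · rw [List.length_map, List.length_range, hFk1len]
  · intro row hrow
    rw [List.mem_map] at hrow
    obtain ⟨i, _, rfl⟩ := hrow
    rw [List.length_map, List.length_range, hFkwid]
  · intro i j hi hj
    rw [hFk1len] at hi
    rw [hFkwid] at hj
    have hir : i < rcoarse.length := by rw [hqsdef, List.length_map] at hi; exact hi
    have hjc : j < ccoarse.length := by rw [hpsdef, List.length_map] at hj; exact hj
    set dd := rcoarse.getD i ∅ with hdd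
    set cc := ccoarse.getD j ∅ with hcc
    have hddsub : dd ⊆ BB ∪ BC := EP_subset dd (getD_mem' _ _ hir)
    have hccsub : cc ⊆ AA ∪ AB := EP_subset cc (getD_mem' _ _ hjc)
    -- the block entries
    have hajk : (EP (sA c (k+1)) AA).getD j ∅ = cc ∩ AA := by
      rw [← hcolsK, getD_map' _ _ _ ∅ hjc]
    have hbik1 : (EP (tB c (k+1)) BC).getD i ∅ = dd ∩ BC := by
      rw [← hrowsK1, getD_map' _ _ _ ∅ hir]
    -- identify colBlock
    have hcolBlock : colBlock (elemFactor c k) ((qs.take i).sum) (qs.getD i 0) j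
        = (EP dd (BB ∩ dd)).map (fun bi => [(cc ∩ AA, bi)]) := by
      rw [elemFactor_eq, ← hBB, ← hAA,
        colBlock_mapmap _ _ (by rw [← elemFactor_wid c k, hFkwid]; exact hj)]
      rw [hrowsFine]
      have hseg := flatMap_seg rcoarse (fun dd => EP dd (BB ∩ dd)) hir
      rw [← hqsdef] at hseg
      rw [hseg, hajk]
    -- identify rowBlock
    have hrowBlock : rowBlock (elemFactor c (k+1)) i ((ps.take j).sum) (ps.getD j 0)
        = (EP cc (AB ∩ cc)).map (fun aj => [(aj, dd ∩ BC)]) := by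
      rw [elemFactor_eq, ← hBC, ← hAB]
      rw [rowBlock_mapmap (by rw [← elemFactor_length c (k+1), hFk1len]; exact hi)]
      show ((((EP (sA c (k+1+1)) AB).drop ((ps.take j).sum)).take (ps.getD j 0)).map _) = _
      have h22 : (EP (sA c (k+1+1)) AB) = ccoarse.flatMap (fun cc => EP cc (AB ∩ cc)) :=
        hcolsFine
      rw [h22]
      have hseg := flatMap_seg ccoarse (fun cc => EP cc (AB ∩ cc)) hjc
      rw [← hpsdef] at hseg
      rw [hseg, hbik1]
    -- the TP witness
    set c₀ : Bip := [(cc ∩ AA, BB ∩ dd), (AB ∩ cc, dd ∩ BC)] with hc₀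
    have hfstU : (cc ∩ AA) ∪ ((AB ∩ cc) ∪ ∅) = cc := by
      rw [Finset.union_empty, Finset.inter_comm AB cc, ← Finset.inter_union_distrib_left]
      exact Finset.inter_eq_left.2 hccsub
    have hsndU : (BB ∩ dd) ∪ ((dd ∩ BC) ∪ ∅) = dd := by
      rw [Finset.union_empty, Finset.inter_comm BB dd,
        ← Finset.inter_union_distrib_left]
      exact Finset.inter_eq_left.2 hddsub
    have hbip : IsBipartition cc dd c₀ := by
      refine ⟨List.cons_ne_nil _ _, ⟨?_, ?_⟩, ⟨?_, ?_⟩⟩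
      · show List.Pairwise Disjoint [cc ∩ AA, AB ∩ cc]
        refine List.pairwise_cons.2 ⟨?_, List.pairwise_singleton _ _⟩
        intro y hy
        rw [List.mem_singleton] at hy
        subst hy
        exact hAdisj.mono Finset.inter_subset_right Finset.inter_subset_left
      · show listUnion [cc ∩ AA, AB ∩ cc] = cc
        rw [listUnion_cons, listUnion_cons, listUnion_nil]
        exact hfstU
      · show List.Pairwise Disjoint [BB ∩ dd, dd ∩ BC]
        refine List.pairwise_cons.2 ⟨?_, List.pairwise_singleton _ _⟩
        intro y hy
        rw [List.mem_singleton] at hy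
        subst hy
        exact hBdisj.mono Finset.inter_subset_left Finset.inter_subset_right
      · show listUnion [BB ∩ dd, dd ∩ BC] = dd
        rw [listUnion_cons, listUnion_cons, listUnion_nil]
        exact hsndU
    have htc : transColumn dd c₀ 1 = (EP dd (BB ∩ dd)).map (fun bst => [(cc ∩ AA, bst)]) := by
      rw [hc₀, transColumn_pair, Finset.union_empty]
      apply List.map_congr_left
      intro bst hbst
      have hb' : bst ⊆ BB ∩ dd := EP_subset bst hbst
      rw [Finset.inter_eq_right.2 hb']
    have htr : transRow cc c₀ 1 = (EP cc (AB ∩ cc)).map (fun aj => [(aj, dd ∩ BC)]) := by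
      rw [hc₀, transRow_pair, Finset.union_empty]
      apply List.map_congr_left
      intro aj haj
      have ha' : aj ⊆ AB ∩ cc := EP_subset aj haj
      rw [Finset.inter_eq_right.2 ha']
    have hlen₀ : 1 < c₀.length := by rw [hc₀]; exact Nat.one_lt_two
    constructor
    · exact ⟨cc, dd, c₀, 1, hbip, le_refl 1, hlen₀,
        hcolBlock.trans htc.symm, hrowBlock.trans htr.symm⟩
    · rw [entry, getD_map' _ _ _ 0 (by rw [List.length_range]; exact hi), getD_range hi,
        getD_map' _ _ _ 0 (by rw [List.length_range]; exact hj), getD_range hj]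
end Part8
section Part9

lemma getD_range_map {α : Type*} (f : ℕ → α) (d : α) {n i : ℕ} (hi : i < n) :
    ((List.range n).map f).getD i d = f i := by
  rw [getD_map' _ _ _ 0 (by simpa using hi), getD_range hi]

theorem forward_fact {a b : Finset ℕ} {c : Bip} (hc : IsBipartition a b c)
    (hr : 2 ≤ c.length) :
    IsMatFactorization ((List.range c.length).map (elemFactor c)) [[c]] := by
  obtain ⟨hne, ⟨hpdA, huA⟩, ⟨hpdB, huB⟩⟩ := hc
  have hc' : IsBipartition a b c := ⟨hne, ⟨hpdA, huA⟩, ⟨hpdB, huB⟩⟩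
  refine ⟨by simpa using hr, ?_, ?_, ?_⟩
  · intro F hF
    rw [List.mem_map] at hF
    obtain ⟨k, _, rfl⟩ := hF
    exact elemFactor_isBipMat c k
  · intro k hk
    rw [List.length_map, List.length_range] at hk
    rw [getD_range_map _ _ (by omega : k < c.length), getD_range_map _ _ hk]
    exact elemFactor_btp hc' hk
  · refine ⟨(List.range c.length).map
      (fun k => (transColumn b c (k+1)).map (fun e => [e])), ?_, ?_, ?_, ?_⟩
    · rw [List.length_map, List.length_range, List.length_map, List.length_range]
    · rw [getD_range_map _ _ (by omega : 0 < c.length),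
        getD_range_map _ _ (by omega : 0 < c.length)]
      exact transColumn_one hne huB
    · intro k hk
      rw [List.length_map, List.length_range] at hk
      rw [getD_range_map _ _ (by omega : k < c.length), getD_range_map _ _ hk,
        getD_range_map _ _ hk]
      exact chainStep hc' (by omega)
    · rw [List.length_map, List.length_range,
        getD_range_map _ _ (by omega : c.length - 1 < c.length)]
      have h1 : c.length - 1 + 1 = c.length := by omega
      rw [h1, transColumn_last huB]
      rfl

end Part9
section Part10

lemma getD_drop' {α : Type*} (l : List α) (d : α) {n : ℕ} (hn : n < l.length) :
    (l.drop n).getD 0 d = l.getD n d := by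
  rw [List.getD_eq_getElem _ _ (by rw [List.length_drop]; omega),
    List.getD_eq_getElem _ _ hn, List.getElem_drop]
  congr 1

lemma elemMat_entry_len {M : List (List Bip)} (hel : IsElemMat M) {i j : ℕ}
    (hi : i < M.length) (hj : j < wid M) : (entry M i j).length = 1 := by
  obtain ⟨as, bs, rfl⟩ := hel
  have hbs : i < bs.length := by simpa using hi
  have hbsne : bs ≠ [] := by
    intro h; rw [h] at hbs; simp at hbs
  have hwid : wid (bs.map fun bo => as.map fun ao => [(ao, bo)]) = as.length :=
    wid_mapmap (f := fun ao bo => [(ao, bo)]) hbsne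
  rw [hwid] at hj
  rw [entry_mapmap (f := fun ao bo => [(ao, bo)]) hbs hj]
  rfl

lemma colBlock_length' (M : List (List Bip)) (off h j : ℕ) (hoh : off + h ≤ M.length) :
    (colBlock M off h j).length = h := by
  rw [colBlock, List.length_map, List.length_take, List.length_drop]
  omega

lemma colBlock_head {M : List (List Bip)} {off h : ℕ} (hoff : off < M.length) (hh : 1 ≤ h) :
    (colBlock M off h 0).getD 0 [] = entry M off 0 := by
  have hblen : 0 < ((M.drop off).take h).length := by
    rw [List.length_take, List.length_drop]; omega
  rw [colBlock, getD_map' _ _ _ [] hblen, getD_take' _ _ (by omega) (by rw [List.length_drop]; omega),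
    getD_drop' _ _ hoff]
  rfl

lemma rows_to_singletons : ∀ (rows : List (List Bip)), (∀ r ∈ rows, r.length = 1) →
    rows = (rows.map (fun r => r.getD 0 [])).map (fun e => [e]) := by
  intro rows
  induction rows with
  | nil => intro _; rfl
  | cons r rows ih =>
    intro h
    rw [List.map_cons, List.map_cons, ← ih (fun x hx => h x (by simp [hx]))]
    congr 1
    exact singleton_of_length_one [] (h r (by simp))

lemma sum_take_succ' (qs : List ℕ) {i : ℕ} (hi : i < qs.length) :
    (qs.take (i+1)).sum = (qs.take i).sum + qs.getD i 0 := by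
  rw [List.sum_take_succ _ _ hi, List.getD_eq_getElem _ _ hi]

lemma off_h_le (qs : List ℕ) {i : ℕ} (hi : i < qs.length) :
    (qs.take i).sum + qs.getD i 0 ≤ qs.sum := by
  rw [← sum_take_succ' qs hi]
  exact sum_take_le _ _

lemma ps_singleton {ps : List ℕ} (h : ps.length = 1) :
    ∃ w, ps = [w] ∧ ps.sum = w ∧ ps.getD 0 0 = w := by
  cases ps with
  | nil => simp at h
  | cons p t =>
    cases t with
    | nil => exact ⟨p, rfl, by simp, rfl⟩
    | cons q u => simp at h

lemma transColumn_ne (b : Finset ℕ) (c : Bip) (lam : ℕ) : transColumn b c lam ≠ [] := by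
  rw [transColumn_eq]
  exact fun h => EP_ne _ _ (List.map_eq_nil_iff.1 h)

lemma transColumn_getD_len {b₀ : Finset ℕ} {c₀ : Bip} {lam : ℕ} (hlam : lam ≤ c₀.length)
    {i : ℕ} (hi : i < (transColumn b₀ c₀ lam).length) :
    ((transColumn b₀ c₀ lam).getD i []).length = lam := by
  rw [transColumn_eq] at hi ⊢
  rw [List.length_map] at hi
  rw [getD_map' _ _ _ ∅ hi, colEnt, List.length_map, List.length_take]
  omega

lemma transRow_ne (a : Finset ℕ) (c : Bip) (lam : ℕ) : transRow a c lam ≠ [] := by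
  rw [transRow]
  exact fun h => EP_ne _ _ (List.map_eq_nil_iff.1 h)

lemma transRow_getD_len {a₀ : Finset ℕ} {c₀ : Bip} {lam : ℕ}
    {i : ℕ} (hi : i < (transRow a₀ c₀ lam).length) :
    ((transRow a₀ c₀ lam).getD i []).length = c₀.length - lam := by
  rw [transRow] at hi ⊢
  rw [List.length_map] at hi
  rw [getD_map' _ _ _ ∅ hi, List.length_map, List.length_drop]

lemma coarse_length_eq {b : Finset ℕ} {c : Bip} (hpdB : (c.map Prod.snd).Pairwise Disjoint)
    (hbu : listUnion (c.map Prod.snd) = b) {k : ℕ} (hk : k + 1 < c.length) :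
    (EP b (sB c (k+2))).length = (elemFactor c (k+1)).length := by
  rw [elemFactor_length, ← EP_inter_block hpdB hbu hk, List.length_map]

lemma entry_coarse_map {b : Finset ℕ} {c : Bip} {k i : ℕ}
    (hi : i < (EP b (sB c (k+2))).length) :
    entry ((transColumn b c (k+2)).map (fun e => [e])) i 0
      = colEnt c (k+2) ((EP b (sB c (k+2))).getD i ∅) := by
  rw [entry_mapSingleton _ (by rw [transColumn_eq, List.length_map]; exact hi),
    transColumn_eq, getD_map' _ _ _ ∅ hi]

end Part10
section Part11

theorem uniqueness {a b : Finset ℕ} {c : Bip} (hc : IsBipartition a b c) (hr : 2 ≤ c.length)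
    (Cs : List (List (List Bip))) (hfact : IsMatFactorization Cs [[c]])
    (helem : ∀ F ∈ Cs, IsElemMat F) :
    Cs = (List.range c.length).map (elemFactor c) := by
  obtain ⟨hneC, ⟨hpdA, huA⟩, ⟨hpdB, huB⟩⟩ := hc
  obtain ⟨h2, hmat, hbtp, D, hDlen, hD0, hDstep, hDlast⟩ := hfact
  set s := Cs.length with hs
  have hs2 : 2 ≤ s := h2
  have hCmat : ∀ k, k < s → IsBipMat (Cs.getD k []) := fun k hk => hmat _ (getD_mem' _ _ hk)
  have hCelem : ∀ k, k < s → IsElemMat (Cs.getD k []) := fun k hk => helem _ (getD_mem' _ _ hk)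
  have hCwpos : ∀ k, k < s → 0 < wid (Cs.getD k []) :=
    fun k hk => List.length_pos_iff.2 (hCmat k hk).ncols
  have hClpos : ∀ k, k < s → 0 < (Cs.getD k []).length :=
    fun k hk => List.length_pos_iff.2 (hCmat k hk).nrows
  -- U1: widths and row shapes along the chain
  have hW : ∀ k, k < s → wid (D.getD k []) = wid (D.getD 0 []) ∧ D.getD k [] ≠ [] ∧
      (∀ row ∈ D.getD k [], row.length = wid (D.getD 0 [])) := by
    intro k
    induction k with
    | zero =>
      intro hk
      refine ⟨rfl, ?_, ?_⟩
      · rw [hD0]; exact (hCmat 0 (by omega)).nrows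
      · intro row hrow
        rw [hD0] at hrow ⊢
        exact (hCmat 0 (by omega)).rect row hrow
    | succ k ih =>
      intro hk
      have hkk : k < s := by omega
      obtain ⟨hw0, hne0, hrows0⟩ := ih hkk
      obtain ⟨qs, ps, hqsl, hpsl, hqsum, hpsum, hq1, hp1, hClen, hCrow, hTPE⟩ := hDstep k hk
      have hlenpos : 0 < (D.getD (k+1) []).length := by
        rw [hClen]; exact hClpos (k+1) hk
      have hne1 : D.getD (k+1) [] ≠ [] := List.length_pos_iff.1 hlenpos
      refine ⟨?_, hne1, ?_⟩
      · rw [wid, (hCrow _ (headD_mem' _ [] hne1)), hw0]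
    --
      · intro row hrow
        rw [hCrow row hrow, hw0]
  have hwid1 : ∀ k, k < s → wid (D.getD k []) = 1 := by
    have hlast := (hW (s-1) (by omega)).1
    rw [hDlast] at hlast
    intro k hk
    rw [(hW k hk).1, ← hlast]
    rfl
  have hDne : ∀ k, k < s → D.getD k [] ≠ [] := fun k hk => (hW k hk).2.1
  have hrows1 : ∀ k, k < s → ∀ row ∈ D.getD k [], row.length = 1 := by
    intro k hk row hrow
    rw [(hW k hk).2.2 row hrow, ← (hW k hk).1, hwid1 k hk]
  -- U2: entry lengths
  have hU2 : ∀ k, k < s → ∀ i, i < (D.getD k []).length →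
      (entry (D.getD k []) i 0).length = k + 1 := by
    intro k
    induction k with
    | zero =>
      intro hk i hi
      rw [hD0] at hi ⊢
      exact elemMat_entry_len (hCelem 0 hk) hi (hCwpos 0 hk)
    | succ k ih =>
      intro hk i hi
      have hkk : k < s := by omega
      obtain ⟨qs, ps, hqsl, hpsl, hqsum, hpsum, hq1, hp1, hClen, hCrow, hTPE⟩ := hDstep k hk
      have hiB : i < (Cs.getD (k+1) []).length := by rw [← hClen]; exact hi
      obtain ⟨hTP, hEnt⟩ := hTPE i 0 hiB (by rw [hwid1 k hkk]; omega)
      obtain ⟨a₀, b₀, c₀, lam₀, hbip₀, hlam1, hlamlt, hAcol, hBrow⟩ := hTP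
      have hiq : i < qs.length := by rw [hqsl]; exact hiB
      have hq1' : 1 ≤ qs.getD i 0 := hq1 _ (getD_mem' _ _ hiq)
      have hoh : (qs.take i).sum + qs.getD i 0 ≤ (D.getD k []).length := by
        rw [← hqsum]; exact off_h_le qs hiq
      have hoff : (qs.take i).sum < (D.getD k []).length := by omega
      have hlen0 : ((colBlock (D.getD k []) ((qs.take i).sum) (qs.getD i 0) 0).getD 0 []).length
          = k + 1 := by
        rw [colBlock_head hoff hq1']
        exact ih hkk _ hoff
      rw [hAcol] at hlen0
      have htcpos : 0 < (transColumn b₀ c₀ lam₀).length :=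
        List.length_pos_iff.2 (transColumn_ne _ _ _)
      rw [transColumn_getD_len (le_of_lt hlamlt) htcpos] at hlen0
      -- c₀.length = k + 2
      obtain ⟨w, hpseq, hwsum, hw0⟩ := ps_singleton (by rw [hpsl, hwid1 k hkk])
      have hw1 : 1 ≤ w := hp1 w (by rw [hpseq]; exact List.mem_singleton_self _)
      have hrowlen : (Cs.getD (k+1) []).getD i [] ∈ Cs.getD (k+1) [] := getD_mem' _ _ hiB
      have hrlen := (hCmat (k+1) hk).rect _ hrowlen
      have hrb_eq : (transRow a₀ c₀ lam₀).getD 0 [] = entry (Cs.getD (k+1) []) i 0 := by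
        rw [← hBrow, rowBlock]
        show ((((Cs.getD (k+1) []).getD i []).drop (([] : List ℕ) ++ (ps.take 0)).sum).take
          (ps.getD 0 0)).getD 0 [] = _
        rw [List.nil_append, List.take_zero, List.sum_nil, List.drop_zero, hw0]
        rw [getD_take' _ _ (by omega) (by rw [hrlen, ← hpsum, hwsum]; omega)]
        rfl
      have hrbpos : 0 < (transRow a₀ c₀ lam₀).length := List.length_pos_iff.2 (transRow_ne _ _ _)
      have hrblen := transRow_getD_len (a₀ := a₀) (c₀ := c₀) (lam := lam₀) hrbpos
      rw [hrb_eq, elemMat_entry_len (hCelem (k+1) hk) hiB (hCwpos (k+1) hk)] at hrblen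
      rw [hEnt, hAcol, hBrow, tpProd_trans hbip₀ hlamlt]
      omega
  -- U3: the number of factors
  have hslen : s = c.length := by
    have h1 : 0 < (D.getD (s-1) []).length := by rw [hDlast]; exact Nat.one_pos
    have h := hU2 (s-1) (by omega) 0 h1
    rw [hDlast] at h
    have hcc : entry [[c]] 0 0 = c := rfl
    rw [hcc] at h
    omega
  -- U4: the downward step
  have hdown : ∀ k, k + 1 < s →
      D.getD (k+1) [] = (transColumn b c (k+2)).map (fun e => [e]) →
      D.getD k [] = (transColumn b c (k+1)).map (fun e => [e]) ∧
      Cs.getD (k+1) [] = elemFactor c (k+1) := by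
    intro k hk hDk1
    obtain ⟨qs, ps, hqsl, hpsl, hqsum, hpsum, hq1, hp1, hClen, hCrow, hTPE⟩ := hDstep k hk
    have hkk : k < s := by omega
    have hk1c : k + 1 < c.length := by omega
    set coarse := EP b (sB c (k+2)) with hco
    have hD1len : (D.getD (k+1) []).length = coarse.length := by
      rw [hDk1, List.length_map, transColumn_eq, List.length_map]
    have hB1len : (Cs.getD (k+1) []).length = coarse.length := by rw [← hClen, hD1len]
    have hEFlen : (elemFactor c (k+1)).length = coarse.length :=
      (coarse_length_eq hpdB huB hk1c).symm
    obtain ⟨w, hpseq, hwsum, hw0⟩ := ps_singleton (by rw [hpsl, hwid1 k hkk])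
    have hw1 : 1 ≤ w := hp1 w (by rw [hpseq]; exact List.mem_singleton_self _)
    have key : ∀ i, i < coarse.length →
        colBlock (D.getD k []) ((qs.take i).sum) (qs.getD i 0) 0
          = (EP (coarse.getD i ∅) (sB c (k+1) ∩ coarse.getD i ∅)).map (colEnt c (k+1)) ∧
        (Cs.getD (k+1) []).getD i [] = (elemFactor c (k+1)).getD i [] := by
      intro i hi
      have hiB : i < (Cs.getD (k+1) []).length := by rw [hB1len]; exact hi
      obtain ⟨hTP, hEnt⟩ := hTPE i 0 hiB (by rw [hwid1 k hkk]; omega)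
      obtain ⟨a₀, b₀, c₀, lam₀, hbip₀, hlam1, hlamlt, hAcol, hBrow⟩ := hTP
      have hiq : i < qs.length := by rw [hqsl]; exact hiB
      have hq1' : 1 ≤ qs.getD i 0 := hq1 _ (getD_mem' _ _ hiq)
      have hoh : (qs.take i).sum + qs.getD i 0 ≤ (D.getD k []).length := by
        rw [← hqsum]; exact off_h_le qs hiq
      have hoff : (qs.take i).sum < (D.getD k []).length := by omega
      -- lam₀ = k+1
      have hlen0 : ((colBlock (D.getD k []) ((qs.take i).sum) (qs.getD i 0) 0).getD 0 []).length
          = k + 1 := by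
        rw [colBlock_head hoff hq1']
        exact hU2 k hkk _ hoff
      rw [hAcol] at hlen0
      have htcpos : 0 < (transColumn b₀ c₀ lam₀).length :=
        List.length_pos_iff.2 (transColumn_ne _ _ _)
      rw [transColumn_getD_len (le_of_lt hlamlt) htcpos] at hlen0
      -- c₀ is the known entry
      have hblk : coarse.getD i ∅ ⊆ sB c (k+2) := EP_subset _ (getD_mem' _ _ hi)
      have hentry : entry (D.getD (k+1) []) i 0 = colEnt c (k+2) (coarse.getD i ∅) := by
        rw [hDk1]; exact entry_coarse_map hi
      have hc₀ : c₀ = colEnt c (k+2) (coarse.getD i ∅) := by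
        rw [← hentry, hEnt, hAcol, hBrow, tpProd_trans hbip₀ hlamlt]
      have hb₀ : b₀ = coarse.getD i ∅ := by
        have hu := hbip₀.2.2.2
        rw [hc₀] at hu
        rw [← hu]
        exact bipOS_colEnt c (k+2) hblk
      have ha₀ : a₀ = sA c (k+2) := by
        have hu := hbip₀.2.1.2
        rw [hc₀] at hu
        rw [← hu]
        exact bipIS_colEnt c (k+2) _
      constructor
      · rw [hAcol, hb₀, hc₀, hlen0, transColumn_colEnt c (by omega) (coarse.getD i ∅)]
      · -- row equality
        have hrowmem : (Cs.getD (k+1) []).getD i [] ∈ Cs.getD (k+1) [] := getD_mem' _ _ hiB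
        have hrlen := (hCmat (k+1) hk).rect _ hrowmem
        have hrw : rowBlock (Cs.getD (k+1) []) i ((ps.take 0).sum) (ps.getD 0 0)
            = (Cs.getD (k+1) []).getD i [] := by
          rw [rowBlock, List.take_zero, List.sum_nil, List.drop_zero, hw0]
          apply List.take_of_length_le
          rw [hrlen, ← hpsum, hwsum]
        calc (Cs.getD (k+1) []).getD i []
            = rowBlock (Cs.getD (k+1) []) i ((ps.take 0).sum) (ps.getD 0 0) := hrw.symm
          _ = transRow a₀ c₀ lam₀ := hBrow
          _ = (elemFactor c (k+1)).getD i [] := by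
              rw [ha₀, hc₀, hlen0]
              exact transRow_eq_elemRow hpdB huB hk1c hi
    -- C equality
    have hCeq : Cs.getD (k+1) [] = elemFactor c (k+1) := by
      apply List.ext_getElem (by rw [hB1len, hEFlen])
      intro n h1 h2
      have hn : n < coarse.length := by rw [← hB1len]; exact h1
      rw [← List.getD_eq_getElem _ [] h1, ← List.getD_eq_getElem _ [] h2]
      exact (key n hn).2
    -- qs as chunk lengths
    have hqslen : qs.length = coarse.length := by rw [hqsl, hB1len]
    set g : Finset ℕ → List (List Bip) :=
      fun blk => ((EP blk (sB c (k+1) ∩ blk)).map (colEnt c (k+1))).map (fun e => [e]) with hg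
    have hqs_eq : qs = coarse.map (fun blk => (g blk).length) := by
      apply List.ext_getElem (by rw [hqslen, List.length_map])
      intro n h1 h2
      have hn : n < coarse.length := by rwa [hqslen] at h1
      have hiq : n < qs.length := h1
      have hoh : (qs.take n).sum + qs.getD n 0 ≤ (D.getD k []).length := by
        rw [← hqsum]; exact off_h_le qs hiq
      have hcl : (colBlock (D.getD k []) ((qs.take n).sum) (qs.getD n 0) 0).length
          = qs.getD n 0 := colBlock_length' _ _ _ _ hoh
      rw [(key n hn).1] at hcl
      rw [← List.getD_eq_getElem qs 0 h1, ← List.getD_eq_getElem _ 0 h2, getD_map' _ _ _ ∅ hn,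
        ← hcl, hg]
      simp only [List.length_map]
    -- flatten structure of myD k
    have hmyflat : (transColumn b c (k+1)).map (fun e => [e]) = coarse.flatMap g := by
      rw [transColumn_flatten b c (by omega : k+1 ≤ k+2) (sB_subset huB _), List.map_flatMap]
    -- D_k equality
    have hDkeq : D.getD k [] = (transColumn b c (k+1)).map (fun e => [e]) := by
      apply eq_of_blocks qs
      · rw [hqsum]
      · rw [hmyflat, List.length_flatMap, hqs_eq]
      · intro n hn'
        have hn : n < coarse.length := by rwa [hqslen] at hn'
        have hblockrows : ∀ r ∈ ((D.getD k []).drop ((qs.take n).sum)).take (qs.getD n 0),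
            r.length = 1 :=
          fun r hr => hrows1 k hkk r (List.drop_subset _ _ (List.take_subset _ _ hr))
        have hLHS : ((D.getD k []).drop ((qs.take n).sum)).take (qs.getD n 0)
            = (colBlock (D.getD k []) ((qs.take n).sum) (qs.getD n 0) 0).map (fun e => [e]) := by
          rw [colBlock]
          exact rows_to_singletons _ hblockrows
        rw [hLHS, (key n hn).1, hmyflat]
        have hseg := flatMap_seg coarse g hn
        rw [← hqs_eq] at hseg
        rw [hseg, hg]
    exact ⟨hDkeq, hCeq⟩
  -- downward induction
  have hdownall : ∀ j, j ≤ s - 1 →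
      D.getD (s-1-j) [] = (transColumn b c ((s-1-j)+1)).map (fun e => [e]) := by
    intro j
    induction j with
    | zero =>
      intro _
      have h1 : s - 1 - 0 = s - 1 := by omega
      have h2' : s - 1 + 1 = c.length := by omega
      rw [h1, hDlast, h2', transColumn_last huB]
      rfl
    | succ j ih =>
      intro hj
      have hk : (s-1-(j+1)) + 1 < s := by omega
      have heq : (s-1-(j+1)) + 1 = s-1-j := by omega
      have h2' : (s-1-(j+1)) + 2 = (s-1-j) + 1 := by omega
      refine (hdown _ hk ?_).1
      rw [heq, h2']
      exact ih (by omega)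
  have hCall : ∀ m, m < s → Cs.getD m [] = elemFactor c m := by
    intro m hm
    cases m with
    | zero =>
      have h0 := hdownall (s-1) (le_refl _)
      have h1 : s - 1 - (s-1) = 0 := by omega
      rw [h1, hD0] at h0
      rw [h0]
      exact transColumn_one hneC huB
    | succ m' =>
      have hj : s - 1 - (s-1-(m'+1)) = m' + 1 := by omega
      have hD1 := hdownall (s-1-(m'+1)) (by omega)
      rw [hj] at hD1
      exact (hdown m' hm (by
        have h2' : m' + 1 + 1 = m' + 2 := rfl
        rw [← h2']
        exact hD1)).2
  apply List.ext_getElem (by rw [List.length_map, List.length_range, ← hslen, ← hs])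
  intro n h1 h2
  have hn : n < s := by rw [hs]; exact h1
  rw [← List.getD_eq_getElem _ [] h1, ← List.getD_eq_getElem _ [] h2, hCall n hn,
    getD_range_map _ _ (by rw [← hslen]; exact hn)]

end Part11

/-- Let `c` be a bipartition on `(a, b)` of length `r > 1`, and let
`C_k` be its `k`-th elementary factor as above.  Then `c = C₁ C₂ ⋯ C_r` is a
factorization of `c` (viewed as a `1×1` matrix): each consecutive pair is a Block
Transverse Pair and the iterated product equals `c`; each `C_k` is an elementary
matrix; and this is the unique factorization of `c` into elementary bipartition
matrices. -/
theorem statement7 (a b : Finset ℕ) (c : Bip)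
    (hc : IsBipartition a b c) (hr : 2 ≤ c.length) :
    IsMatFactorization ((List.range c.length).map (elemFactor c)) [[c]] ∧
    (∀ F ∈ (List.range c.length).map (elemFactor c), IsElemMat F) ∧
    (∀ Cs : List (List (List Bip)), IsMatFactorization Cs [[c]] →
      (∀ F ∈ Cs, IsElemMat F) → Cs = (List.range c.length).map (elemFactor c)) := by
  refine ⟨forward_fact hc hr, ?_, ?_⟩
  · intro F hF
    rw [List.mem_map] at hF
    obtain ⟨k, _, rfl⟩ := hF
    exact elemFactor_isElemMat c k
  · intro Cs hCs helemCs
    exact uniqueness hc hr Cs hCs helemCs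

end BipM
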